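/- arXiv:1306.6761 — 8 statements merged into one kernel-verified Lean document; each statement's English description precedes it below -/
import Mathlib

section
/- For every probability measure μ on ℝ^d, every starting point x ∈ ℝ^d, every z ∈ K* and every n ≥ 1, one has P_μ^x[τ_K > n] ≤ L_μ(z)^n e^{⟨z,x⟩}. Consequently, limsup_{n→∞} (P_μ^x[τ_K > n])^{1/n} ≤ inf_{z ∈ K*} L_μ(z) for all x ∈ ℝ^d. -/
open MeasureTheory ProbabilityTheory Filter
open scoped ENNReal RealInnerProductSpace Topology

/-- The Laplace transform of a measure `μ` on `ℝ^d`, with values in `ℝ≥0∞`. -/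
noncomputable def laplace {d : ℕ} (μ : Measure (EuclideanSpace ℝ (Fin d)))
    (x : EuclideanSpace ℝ (Fin d)) : ℝ≥0∞ :=
  ∫⁻ y, ENNReal.ofReal (Real.exp ⟪x, y⟫) ∂μ

/-- The dual cone `K* = {z : ⟨x,z⟩ ≥ 0 for all x ∈ K}`. -/
def dualCone {d : ℕ} (K : Set (EuclideanSpace ℝ (Fin d))) : Set (EuclideanSpace ℝ (Fin d)) :=
  {z | ∀ x ∈ K, 0 ≤ ⟪x, z⟫}

lemma lintegral_prod_iIndep {Ω : Type} [MeasurableSpace Ω] (P : Measure Ω)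
    [IsProbabilityMeasure P] (f : ℕ → Ω → ℝ≥0∞) (hmeas : ∀ i, Measurable (f i))
    (hindep : iIndepFun f P) (n : ℕ) :
    ∫⁻ ω, ∏ i ∈ Finset.range n, f i ω ∂P = ∏ i ∈ Finset.range n, ∫⁻ ω, f i ω ∂P := by
  induction n with
  | zero => simp
  | succ n ih =>
    have hind := hindep.indepFun_prod_range_succ hmeas n
    have h := lintegral_mul_eq_lintegral_mul_lintegral_of_indepFun
      (Finset.measurable_prod (Finset.range n) (fun i _ => hmeas i)) (hmeas n)
      (by rw [Finset.prod_fn] at hind; exact hind)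
    simp only [Finset.prod_range_succ]
    rw [← ih]
    simpa using h

lemma main_chernoff_bound
    {d : ℕ}
    (K : Set (EuclideanSpace ℝ (Fin d)))
    (μ : Measure (EuclideanSpace ℝ (Fin d))) [IsProbabilityMeasure μ]
    (Ω : Type) [MeasurableSpace Ω] (P : Measure Ω) [IsProbabilityMeasure P]
    (X : ℕ → Ω → EuclideanSpace ℝ (Fin d))
    (hXmeas : ∀ n, Measurable (X n))
    (hXindep : iIndepFun X P)
    (hXlaw : ∀ n, Measure.map (X n) P = μ)
    (x : EuclideanSpace ℝ (Fin d)) (z : EuclideanSpace ℝ (Fin d)) (hz : z ∈ dualCone K)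
    (n : ℕ) (hn : 1 ≤ n) :
    P {ω | ∀ k : ℕ, 1 ≤ k → k ≤ n → x + ∑ i ∈ Finset.range k, X i ω ∈ K}
      ≤ laplace μ z ^ n * ENNReal.ofReal (Real.exp ⟪z, x⟫) := by
  set s := {ω | ∀ k : ℕ, 1 ≤ k → k ≤ n → x + ∑ i ∈ Finset.range k, X i ω ∈ K}
  set f : Ω → ℝ≥0∞ := fun ω => ENNReal.ofReal (Real.exp ⟪z, x + ∑ i ∈ Finset.range n, X i ω⟫)
  have hfmeas : Measurable f := by
    apply ENNReal.measurable_ofReal.comp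
    apply Real.measurable_exp.comp
    exact Measurable.inner measurable_const
      (measurable_const.add (Finset.measurable_sum _ fun i _ => hXmeas i))
  have h1 : P s ≤ ∫⁻ ω, f ω ∂P := by
    calc P s = ∫⁻ _ in s, 1 ∂P := (setLIntegral_one s).symm
    _ ≤ ∫⁻ ω in s, f ω ∂P := by
        refine setLIntegral_mono hfmeas fun ω hω => ?_
        have hK : x + ∑ i ∈ Finset.range n, X i ω ∈ K := hω n hn le_rfl
        have h0 : (0:ℝ) ≤ ⟪z, x + ∑ i ∈ Finset.range n, X i ω⟫ := by
          rw [real_inner_comm]; exact hz _ hK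
        simp only [f]
        rw [← ENNReal.ofReal_one]
        exact ENNReal.ofReal_le_ofReal (by simpa using Real.exp_le_exp.2 h0)
    _ ≤ ∫⁻ ω, f ω ∂P := setLIntegral_le_lintegral s f
  have key : ∫⁻ ω, f ω ∂P = laplace μ z ^ n * ENNReal.ofReal (Real.exp ⟪z, x⟫) := by
    have hfe : ∀ ω, f ω = ENNReal.ofReal (Real.exp ⟪z, x⟫) *
        ∏ i ∈ Finset.range n, ENNReal.ofReal (Real.exp ⟪z, X i ω⟫) := by
      intro ω
      simp only [f]
      rw [inner_add_right, inner_sum, Real.exp_add, Real.exp_sum,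
        ENNReal.ofReal_mul (Real.exp_nonneg _),
        ENNReal.ofReal_prod_of_nonneg (fun i _ => Real.exp_nonneg _)]
    have hgmeas : ∀ i : ℕ, Measurable fun ω => ENNReal.ofReal (Real.exp ⟪z, X i ω⟫) := by
      intro i
      exact ENNReal.measurable_ofReal.comp (Real.measurable_exp.comp
        (Measurable.inner measurable_const (hXmeas i)))
    have hgind : iIndepFun
        (fun i ω => ENNReal.ofReal (Real.exp ⟪z, X i ω⟫)) P := by
      exact hXindep.comp (fun i y => ENNReal.ofReal (Real.exp ⟪z, y⟫))
        (fun i => ENNReal.measurable_ofReal.comp (Real.measurable_exp.comp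
          (Measurable.inner measurable_const measurable_id)))
    have hg : Measurable fun y : EuclideanSpace ℝ (Fin d) => ENNReal.ofReal (Real.exp ⟪z, y⟫) :=
      ENNReal.measurable_ofReal.comp (Real.measurable_exp.comp
        (Measurable.inner measurable_const measurable_id))
    have heach : ∀ i : ℕ, ∫⁻ ω, ENNReal.ofReal (Real.exp ⟪z, X i ω⟫) ∂P = laplace μ z := by
      intro i
      rw [laplace, ← hXlaw i]
      exact (lintegral_map hg (hXmeas i)).symm
    calc ∫⁻ ω, f ω ∂P
        = ENNReal.ofReal (Real.exp ⟪z, x⟫) *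
          ∫⁻ ω, ∏ i ∈ Finset.range n, ENNReal.ofReal (Real.exp ⟪z, X i ω⟫) ∂P := by
          rw [← lintegral_const_mul _ (Finset.measurable_prod _ fun i _ => hgmeas i)]
          exact lintegral_congr fun ω => hfe ω
      _ = ENNReal.ofReal (Real.exp ⟪z, x⟫) * laplace μ z ^ n := by
          rw [lintegral_prod_iIndep P _ hgmeas hgind n,
            Finset.prod_congr rfl (fun i _ => heach i), Finset.prod_const, Finset.card_range]
      _ = laplace μ z ^ n * ENNReal.ofReal (Real.exp ⟪z, x⟫) := mul_comm _ _
  exact h1.trans key.le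

lemma limsup_rpow_le (L : ℝ≥0∞) (hL : L ≠ ⊤) (t : ℝ) (a : ℕ → ℝ≥0∞)
    (h : ∀ n : ℕ, 1 ≤ n → a n ≤ L ^ n * ENNReal.ofReal (Real.exp t)) :
    limsup (fun n : ℕ => a n ^ ((n : ℝ)⁻¹)) atTop ≤ L := by
  set C : ℝ≥0∞ := ENNReal.ofReal (Real.exp t) with hC
  have hCtop : C ≠ ⊤ := ENNReal.ofReal_ne_top
  have hbound : ∀ᶠ n : ℕ in atTop, a n ^ ((n : ℝ)⁻¹) ≤ L * C ^ ((n : ℝ)⁻¹) := by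
    filter_upwards [eventually_ge_atTop 1] with n hn
    have hnn : (0:ℝ) ≤ (n : ℝ)⁻¹ := by positivity
    calc a n ^ ((n : ℝ)⁻¹) ≤ (L ^ n * C) ^ ((n : ℝ)⁻¹) :=
          ENNReal.rpow_le_rpow (h n hn) hnn
      _ = (L ^ n) ^ ((n : ℝ)⁻¹) * C ^ ((n : ℝ)⁻¹) :=
          ENNReal.mul_rpow_of_ne_top (ENNReal.pow_ne_top hL) hCtop _
      _ = L * C ^ ((n : ℝ)⁻¹) := by
          rw [← ENNReal.rpow_natCast L n, ← ENNReal.rpow_mul,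
            mul_inv_cancel₀ (by exact_mod_cast Nat.one_le_iff_ne_zero.mp hn : (n:ℝ) ≠ 0),
            ENNReal.rpow_one]
  have hCrpow : ∀ n : ℕ, C ^ ((n : ℝ)⁻¹) = ENNReal.ofReal (Real.exp (t * (n : ℝ)⁻¹)) := by
    intro n
    rw [hC, ENNReal.ofReal_rpow_of_pos (Real.exp_pos t), ← Real.exp_mul]
  have htend : Tendsto (fun n : ℕ => L * C ^ ((n : ℝ)⁻¹)) atTop (𝓝 L) := by
    have h1 : Tendsto (fun n : ℕ => C ^ ((n : ℝ)⁻¹)) atTop (𝓝 1) := by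
      simp only [hCrpow]
      have h2 : Tendsto (fun n : ℕ => t * (n : ℝ)⁻¹) atTop (𝓝 0) := by
        simpa using (tendsto_inv_atTop_nhds_zero_nat).const_mul t
      have := ((ENNReal.continuous_ofReal.comp Real.continuous_exp).tendsto 0).comp h2
      simpa [Function.comp_def] using this
    have := ENNReal.Tendsto.const_mul (a := L) h1 (Or.inl one_ne_zero)
    simpa using this
  calc limsup (fun n : ℕ => a n ^ ((n : ℝ)⁻¹)) atTop
      ≤ limsup (fun n : ℕ => L * C ^ ((n : ℝ)⁻¹)) atTop := limsup_le_limsup hbound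
    _ = L := htend.limsup_eq

/-- For every starting point `x`, every `z ∈ K*` and every `n ≥ 1`,
`P^x[τ_K > n] ≤ L_μ(z)^n e^{⟨z,x⟩}`; consequently the limsup of the `n`-th root of
the non-exit probability is at most `inf_{K*} L_μ`. -/
theorem nonexit_upper_bound_dual_cone
    {d : ℕ} (hd : 1 ≤ d)
    (K : Set (EuclideanSpace ℝ (Fin d)))
    (hKclosed : IsClosed K) (hKconvex : Convex ℝ K)
    (hKcone : ∀ c : ℝ, 0 ≤ c → ∀ x ∈ K, c • x ∈ K)
    (hKint : (interior K).Nonempty)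
    (μ : Measure (EuclideanSpace ℝ (Fin d))) [IsProbabilityMeasure μ]
    (Ω : Type) [MeasurableSpace Ω] (P : Measure Ω) [IsProbabilityMeasure P]
    (X : ℕ → Ω → EuclideanSpace ℝ (Fin d))
    (hXmeas : ∀ n, Measurable (X n))
    (hXindep : iIndepFun X P)
    (hXlaw : ∀ n, Measure.map (X n) P = μ) :
    (∀ x : EuclideanSpace ℝ (Fin d), ∀ z ∈ dualCone K, ∀ n : ℕ, 1 ≤ n →
      P {ω | ∀ k : ℕ, 1 ≤ k → k ≤ n → x + ∑ i ∈ Finset.range k, X i ω ∈ K}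
        ≤ laplace μ z ^ n * ENNReal.ofReal (Real.exp ⟪z, x⟫)) ∧
    (∀ x : EuclideanSpace ℝ (Fin d),
      limsup (fun n : ℕ =>
          P {ω | ∀ k : ℕ, 1 ≤ k → k ≤ n →
              x + ∑ i ∈ Finset.range k, X i ω ∈ K} ^ ((n : ℝ)⁻¹)) atTop
        ≤ ⨅ z ∈ dualCone K, laplace μ z) := by
  constructor
  · intro x z hz n hn
    exact main_chernoff_bound K μ Ω P X hXmeas hXindep hXlaw x z hz n hn
  · intro x
    refine le_iInf₂ fun z hz => ?_
    rcases eq_or_ne (laplace μ z) ⊤ with hL | hL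
    · exact hL ▸ le_top
    · exact limsup_rpow_le (laplace μ z) hL ⟪z, x⟫ _
        (fun n hn => main_chernoff_bound K μ Ω P X hXmeas hXindep hXlaw x z hz n hn)
end

section
/- Let C ⊆ ℝ^d be a closed convex cone and let μ be a probability measure on ℝ^d with L_μ(x) < ∞ for all x ∈ C. For every unit vector u ∈ C the following dichotomy holds: (1) if μ(u⁻) < 1, then lim_{t→∞} L_μ(x + tu) = ∞ for every x ∈ C; (2) if μ(u⁻) = 1, then lim_{t→∞} L_μ(x + tu) = ∫_{u^⊥} e^{⟨x,y⟩} dμ(y) for every x ∈ C, where u^⊥ = {y ∈ ℝ^d : ⟨u,y⟩ = 0}. -/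
open MeasureTheory ProbabilityTheory Filter
open scoped ENNReal RealInnerProductSpace Topology

/-- **Lemma (behavior at infinity of the Laplace transform)**: let `C` be a closed convex cone
and suppose `L_μ` is finite on `C`. For every unit vector `u ∈ C`:
(1) if `μ(u⁻) < 1` then `L_μ(x + tu) → ∞` as `t → ∞`, for every `x ∈ C`;
(2) if `μ(u⁻) = 1` then `L_μ(x + tu) → ∫_{u^⊥} e^{⟨x,y⟩} dμ(y)` as `t → ∞`, for every `x ∈ C`. -/
theorem laplace_at_infinity_dichotomy
    {d : ℕ} (hd : 1 ≤ d)
    (C : Set (EuclideanSpace ℝ (Fin d)))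
    (hCclosed : IsClosed C) (hCconvex : Convex ℝ C)
    (hCcone : ∀ c : ℝ, 0 ≤ c → ∀ x ∈ C, c • x ∈ C)
    (hCne : C.Nonempty)
    (μ : Measure (EuclideanSpace ℝ (Fin d))) [IsProbabilityMeasure μ]
    (hfin : ∀ x ∈ C, laplace μ x < ⊤)
    (u : EuclideanSpace ℝ (Fin d)) (huC : u ∈ C) (hunorm : ‖u‖ = 1)
    (x : EuclideanSpace ℝ (Fin d)) (hx : x ∈ C) :
    (μ {y | ⟪u, y⟫ ≤ 0} < 1 →
      Tendsto (fun t : ℝ => laplace μ (x + t • u)) atTop (𝓝 ⊤)) ∧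
    (μ {y | ⟪u, y⟫ ≤ 0} = 1 →
      Tendsto (fun t : ℝ => laplace μ (x + t • u)) atTop
        (𝓝 (∫⁻ y in {y | ⟪u, y⟫ = 0}, ENNReal.ofReal (Real.exp ⟪x, y⟫) ∂μ))) := by
  have hinner_meas : ∀ v : EuclideanSpace ℝ (Fin d),
      Measurable (fun y : EuclideanSpace ℝ (Fin d) => ⟪v, y⟫) := fun v =>
    (continuous_const.inner continuous_id).measurable
  have hmx : Measurable (fun y : EuclideanSpace ℝ (Fin d) =>
      ENNReal.ofReal (Real.exp ⟪x, y⟫)) :=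
    (Real.measurable_exp.comp (hinner_meas x)).ennreal_ofReal
  have hkey : ∀ t : ℝ, laplace μ (x + t • u)
      = ∫⁻ y, ENNReal.ofReal (Real.exp (⟪x, y⟫ + t * ⟪u, y⟫)) ∂μ := by
    intro t
    unfold laplace
    congr 1
    ext y
    rw [inner_add_left, real_inner_smul_left]
  constructor
  · -- case μ(u⁻) < 1
    intro hlt
    have hpos : 0 < μ {y | 0 < ⟪u, y⟫} := by
      have hc : {y : EuclideanSpace ℝ (Fin d) | 0 < ⟪u, y⟫} = {y | ⟪u, y⟫ ≤ 0}ᶜ := by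
        ext y; simp [not_le]
      rw [hc]
      rw [pos_iff_ne_zero]
      intro h0
      have := prob_compl_eq_zero_iff (μ := μ)
        (measurableSet_le (hinner_meas u) measurable_const) |>.mp h0
      exact absurd this hlt.ne
    -- find ε > 0 with positive measure
    have hunion : {y : EuclideanSpace ℝ (Fin d) | 0 < ⟪u, y⟫}
        = ⋃ n : ℕ, {y | (1 : ℝ) / (n + 1) ≤ ⟪u, y⟫} := by
      ext y
      simp only [Set.mem_setOf_eq, Set.mem_iUnion]
      constructor
      · intro h
        obtain ⟨n, hn⟩ := exists_nat_one_div_lt h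
        exact ⟨n, hn.le⟩
      · rintro ⟨n, hn⟩
        exact lt_of_lt_of_le (by positivity) hn
    rw [hunion] at hpos
    obtain ⟨n, hn⟩ : ∃ n : ℕ, 0 < μ {y | (1 : ℝ) / (n + 1) ≤ ⟪u, y⟫} := by
      by_contra h
      push_neg at h
      simp only [le_zero_iff] at h
      have := measure_iUnion_null h
      exact hpos.ne' this
    set ε : ℝ := 1 / (n + 1) with hε
    have hεpos : 0 < ε := by positivity
    set A := {y : EuclideanSpace ℝ (Fin d) | ε ≤ ⟪u, y⟫} with hA
    have hAmeas : MeasurableSet A := measurableSet_le measurable_const (hinner_meas u)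
    have hcpos : 0 < ∫⁻ y in A, ENNReal.ofReal (Real.exp ⟪x, y⟫) ∂μ := by
      rw [lt_iff_le_and_ne]
      refine ⟨zero_le, fun h => ?_⟩
      have h' := (lintegral_eq_zero_iff ((ENNReal.measurable_ofReal.comp
        (Real.measurable_exp.comp (hinner_meas x))))).mp h.symm
      have : ∀ᵐ y ∂(μ.restrict A), False := by
        filter_upwards [h'] with y hy
        simp only [Pi.zero_apply, Function.comp] at hy
        exact absurd hy (by positivity)
      rw [ae_iff] at this
      simp only [not_false_iff, Set.setOf_true] at this
      rw [Measure.restrict_apply_univ] at this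
      exact hn.ne' this
    -- lower bound
    have hbound : ∀ t : ℝ, 0 ≤ t →
        ENNReal.ofReal (Real.exp (t * ε)) * (∫⁻ y in A, ENNReal.ofReal (Real.exp ⟪x, y⟫) ∂μ)
          ≤ laplace μ (x + t • u) := by
      intro t ht
      rw [hkey t, ← lintegral_const_mul _ hmx]
      refine le_trans ?_ (setLIntegral_le_lintegral A _)
      refine setLIntegral_mono (ENNReal.measurable_ofReal.comp
        (Real.measurable_exp.comp ((hinner_meas x).add ((hinner_meas u).const_mul t)))) ?_
      intro y hy
      rw [← ENNReal.ofReal_mul (Real.exp_nonneg _), ← Real.exp_add]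
      apply ENNReal.ofReal_le_ofReal
      apply Real.exp_le_exp.mpr
      have hyA : ε ≤ ⟪u, y⟫ := hy
      nlinarith
    have htop : Tendsto (fun t : ℝ => ENNReal.ofReal (Real.exp (t * ε))
        * (∫⁻ y in A, ENNReal.ofReal (Real.exp ⟪x, y⟫) ∂μ)) atTop (𝓝 ⊤) := by
      have h1 : Tendsto (fun t : ℝ => t * ε) atTop atTop :=
        Tendsto.atTop_mul_const hεpos tendsto_id
      have h2 := Real.tendsto_exp_atTop.comp h1
      have h3 := ENNReal.tendsto_ofReal_atTop.comp h2
      have h4 := ENNReal.Tendsto.mul_const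
        (b := ∫⁻ y in A, ENNReal.ofReal (Real.exp ⟪x, y⟫) ∂μ) h3
        (Or.inl ENNReal.top_ne_zero)
      rwa [ENNReal.top_mul hcpos.ne'] at h4
    refine tendsto_nhds_top_mono htop ?_
    filter_upwards [eventually_ge_atTop (0:ℝ)] with t ht
    exact hbound t ht
  · -- case μ(u⁻) = 1
    intro heq
    have hae : ∀ᵐ y ∂μ, ⟪u, y⟫ ≤ 0 := by
      rw [ae_iff]
      have : {y : EuclideanSpace ℝ (Fin d) | ¬ ⟪u, y⟫ ≤ 0} = {y | ⟪u, y⟫ ≤ 0}ᶜ := by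
        ext y; simp
      rw [this]
      exact (prob_compl_eq_zero_iff
        (measurableSet_le (hinner_meas u) measurable_const)).mpr heq
    have hmeas0 : MeasurableSet {y : EuclideanSpace ℝ (Fin d) | ⟪u, y⟫ = 0} :=
      measurableSet_eq_fun (hinner_meas u) measurable_const
    have hrw : (∫⁻ y in {y | ⟪u, y⟫ = 0}, ENNReal.ofReal (Real.exp ⟪x, y⟫) ∂μ)
        = ∫⁻ y, Set.indicator {y | ⟪u, y⟫ = 0}
            (fun y => ENNReal.ofReal (Real.exp ⟪x, y⟫)) y ∂μ := by
      rw [lintegral_indicator hmeas0]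
    rw [hrw]
    simp only [hkey]
    refine tendsto_lintegral_filter_of_dominated_convergence
      (fun y => ENNReal.ofReal (Real.exp ⟪x, y⟫)) ?_ ?_ ?_ ?_
    · filter_upwards with t
      exact ENNReal.measurable_ofReal.comp (Real.measurable_exp.comp
        ((hinner_meas x).add ((hinner_meas u).const_mul t)))
    · filter_upwards [eventually_ge_atTop (0:ℝ)] with t ht
      filter_upwards [hae] with y hy
      apply ENNReal.ofReal_le_ofReal
      apply Real.exp_le_exp.mpr
      nlinarith
    · exact (hfin x hx).ne
    · filter_upwards [hae] with y hy
      rcases lt_or_eq_of_le hy with hlt | heq0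
      · have : Set.indicator {y : EuclideanSpace ℝ (Fin d) | ⟪u, y⟫ = 0}
            (fun y => ENNReal.ofReal (Real.exp ⟪x, y⟫)) y = 0 := by
          apply Set.indicator_of_notMem
          simp only [Set.mem_setOf_eq]
          exact hlt.ne
        rw [this]
        have h1 : Tendsto (fun t : ℝ => ⟪x, y⟫ + t * ⟪u, y⟫) atTop atBot := by
          apply tendsto_atBot_add_const_left
          exact tendsto_id.atTop_mul_const_of_neg hlt
        have h2 := (Real.tendsto_exp_atBot).comp h1
        have h3 := ENNReal.tendsto_ofReal h2
        simpa using h3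
      · have : Set.indicator {y : EuclideanSpace ℝ (Fin d) | ⟪u, y⟫ = 0}
            (fun y => ENNReal.ofReal (Real.exp ⟪x, y⟫)) y
            = ENNReal.ofReal (Real.exp ⟪x, y⟫) := by
          apply Set.indicator_of_mem
          exact heq0
        rw [this]
        simp only [heq0, mul_zero, add_zero]
        exact tendsto_const_nhds
end

section
/- Let C ⊆ ℝ^d be a closed convex cone and let μ be a probability measure on ℝ^d satisfying (H1) and with L_μ(x) < ∞ for all x ∈ C. Then L_μ attains a global minimum on C if and only if there is no u ∈ C \ {0} with μ(u⁻) = 1. -/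
open MeasureTheory ProbabilityTheory Filter
open scoped ENNReal RealInnerProductSpace Topology

section helpers
variable {d : ℕ}
local notation "E" => EuclideanSpace ℝ (Fin d)

lemma measExp (x : E) : Measurable fun y : E => ENNReal.ofReal (Real.exp ⟪x, y⟫) :=
  (ENNReal.continuous_ofReal.comp
    (Real.continuous_exp.comp (continuous_const.inner continuous_id))).measurable

lemma cone_add_mem {C : Set E} (hconv : Convex ℝ C)
    (hcone : ∀ c : ℝ, 0 ≤ c → ∀ x ∈ C, c • x ∈ C)
    {a b : E} (ha : a ∈ C) (hb : b ∈ C) : a + b ∈ C := by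
  have h : (1/2 : ℝ) • a + (1/2 : ℝ) • b ∈ C :=
    hconv ha hb (by norm_num) (by norm_num) (by norm_num)
  have h2 := hcone 2 (by norm_num) _ h
  convert h2 using 1
  rw [smul_add, smul_smul, smul_smul]
  norm_num

lemma laplace_zero (μ : Measure E) [IsProbabilityMeasure μ] : laplace μ 0 = 1 := by
  simp [laplace, inner_zero_left]

lemma laplace_le_liminf (μ : Measure E) {x : ℕ → E} {x₀ : E}
    (hx : Tendsto x atTop (𝓝 x₀)) :
    laplace μ x₀ ≤ liminf (fun n => laplace μ (x n)) atTop := by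
  refine le_trans (le_of_eq ?_) (lintegral_liminf_le (fun n => measExp (x n)))
  refine lintegral_congr fun y => ?_
  have hcont : Continuous fun v : E => ENNReal.ofReal (Real.exp ⟪v, y⟫) :=
    ENNReal.continuous_ofReal.comp
      (Real.continuous_exp.comp (continuous_id.inner continuous_const))
  exact ((hcont.tendsto x₀).comp hx).liminf_eq.symm

lemma exists_radius {C : Set E} (hCclosed : IsClosed C)
    (hCcone : ∀ c : ℝ, 0 ≤ c → ∀ x ∈ C, c • x ∈ C)
    (μ : Measure E) [IsProbabilityMeasure μ]
    (hno : ¬ ∃ u ∈ C, u ≠ 0 ∧ μ {y | ⟪u, y⟫ ≤ 0} = 1) :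
    ∃ R : ℝ, ∀ x ∈ C, R ≤ ‖x‖ → (2 : ℝ≥0∞) < laplace μ x := by
  by_contra hcon
  push_neg at hcon
  choose X hXC hXn hXl using fun n : ℕ => hcon ((n : ℝ) + 1)
  have hXpos : ∀ n, 0 < ‖X n‖ := fun n => lt_of_lt_of_le (by positivity) (hXn n)
  set u : ℕ → E := fun n => (‖X n‖)⁻¹ • X n with hu
  have huC : ∀ n, u n ∈ C := fun n => hCcone _ (inv_nonneg.2 (norm_nonneg _)) _ (hXC n)
  have hun : ∀ n, ‖u n‖ = 1 := by
    intro n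
    simp [hu, norm_smul, abs_of_pos (inv_pos.2 (hXpos n)),
      inv_mul_cancel₀ (hXpos n).ne']
  have hK : IsCompact (C ∩ Metric.sphere (0 : E) 1) :=
    (isCompact_sphere 0 1).inter_left hCclosed
  obtain ⟨v, hvK, φ, hφ, hconv⟩ := hK.tendsto_subseq
    (x := u) (fun n => ⟨huC n, by simp [mem_sphere_zero_iff_norm, hun n]⟩)
  have hv1 : ‖v‖ = 1 := mem_sphere_zero_iff_norm.1 hvK.2
  have hv0 : v ≠ 0 := by intro h; rw [h, norm_zero] at hv1; norm_num at hv1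
  have hμv : μ {y : E | ⟪v, y⟫ ≤ 0} ≠ 1 := fun h => hno ⟨v, hvK.1, hv0, h⟩
  have hvcont : Continuous fun y : E => ⟪v, y⟫ := continuous_const.inner continuous_id
  have hAmeas : MeasurableSet {y : E | ⟪v, y⟫ ≤ 0} :=
    measurableSet_le hvcont.measurable measurable_const
  have hAc : 0 < μ {y : E | ⟪v, y⟫ ≤ 0}ᶜ := by
    rw [prob_compl_eq_one_sub hAmeas]
    exact tsub_pos_of_lt (lt_of_le_of_ne prob_le_one hμv)
  set B : ℕ → Set E := fun n =>
    {y : E | 1 / ((n : ℝ) + 1) ≤ ⟪v, y⟫} ∩ Metric.closedBall 0 ((n : ℝ) + 1) with hB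
  have hsub : {y : E | ⟪v, y⟫ ≤ 0}ᶜ ⊆ ⋃ n, B n := by
    intro y hy
    simp only [Set.mem_compl_iff, Set.mem_setOf_eq, not_le] at hy
    obtain ⟨n, hn⟩ := exists_nat_ge (max (1 / ⟪v, y⟫) ‖y‖)
    refine Set.mem_iUnion.2 ⟨n, ⟨?_, ?_⟩⟩
    · have h1 : 1 / ⟪v, y⟫ ≤ (n : ℝ) + 1 := ((le_max_left _ _).trans hn).trans (by linarith)
      rw [div_le_iff₀ hy] at h1
      rw [Set.mem_setOf_eq, div_le_iff₀ (by positivity : (0:ℝ) < (n:ℝ)+1)]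
      linarith
    · have h2 : ‖y‖ ≤ (n : ℝ) + 1 := ((le_max_right _ _).trans hn).trans (by linarith)
      simpa [Metric.mem_closedBall, dist_zero_right] using h2
  have hBpos : ∃ n, μ (B n) ≠ 0 := by
    by_contra h
    push_neg at h
    have hle := (measure_mono hsub).trans (le_of_eq (measure_iUnion_null h))
    exact hAc.ne' (le_antisymm hle zero_le)
  obtain ⟨n₀, hn₀⟩ := hBpos
  set ε : ℝ := 1 / ((n₀ : ℝ) + 1) with hε
  have hεpos : 0 < ε := by positivity
  set R0 : ℝ := (n₀ : ℝ) + 1 with hR0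
  have hR0pos : 0 < R0 := by positivity
  set δ : ℝ≥0∞ := μ (B n₀) with hδ
  have hδpos : 0 < δ := pos_iff_ne_zero.2 hn₀
  have hδtop : δ ≠ ⊤ := (lt_of_le_of_lt prob_le_one ENNReal.one_lt_top).ne
  set a : ℝ := δ.toReal with ha
  have hapos : 0 < a := ENNReal.toReal_pos hδpos.ne' hδtop
  have hclose : ∀ w : E, ‖w - v‖ ≤ ε / (2 * R0) → B n₀ ⊆ {y : E | ε / 2 ≤ ⟪w, y⟫} := by
    intro w hw y hy
    obtain ⟨hy1, hy2⟩ := hy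
    have hy1' : ε ≤ ⟪v, y⟫ := hy1
    have hy2' : ‖y‖ ≤ R0 := by simpa [dist_zero_right] using hy2
    have hin : |⟪w - v, y⟫| ≤ ‖w - v‖ * ‖y‖ := abs_real_inner_le_norm _ _
    have hprod : ‖w - v‖ * ‖y‖ ≤ (ε / (2 * R0)) * R0 :=
      mul_le_mul hw hy2' (norm_nonneg _) (by positivity)
    have heq : (ε / (2 * R0)) * R0 = ε / 2 := by field_simp
    have hd : ⟪w, y⟫ - ⟪v, y⟫ = ⟪w - v, y⟫ := by rw [inner_sub_left]
    have habs := abs_le.1 hin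
    show ε / 2 ≤ ⟪w, y⟫
    nlinarith [habs.1, habs.2]
  obtain ⟨N1, hN1⟩ := Metric.tendsto_atTop.1 hconv (ε / (2 * R0)) (by positivity)
  obtain ⟨n₁, hn₁⟩ := exists_nat_gt (Real.log (2 / a) / (ε / 2))
  set n := max N1 n₁ with hn
  set w := u (φ n) with hwdef
  have hwc : ‖w - v‖ ≤ ε / (2 * R0) := by
    have h := hN1 n (le_max_left _ _)
    rw [dist_eq_norm] at h
    exact h.le
  have hBsub := hclose w hwc
  set r : ℝ := ‖X (φ n)‖ with hr
  have hrpos : 0 < r := hXpos _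
  have hXw : X (φ n) = r • w := by
    rw [hwdef, hu]
    rw [smul_smul, mul_inv_cancel₀ hrpos.ne', one_smul]
  have hlow : ENNReal.ofReal (Real.exp (r * (ε / 2))) * δ ≤ 2 := by
    calc ENNReal.ofReal (Real.exp (r * (ε / 2))) * δ
        ≤ ENNReal.ofReal (Real.exp (r * (ε / 2))) * μ {y : E | ε / 2 ≤ ⟪w, y⟫} :=
          mul_le_mul_right (measure_mono hBsub) _
      _ = ∫⁻ _ in {y : E | ε / 2 ≤ ⟪w, y⟫}, ENNReal.ofReal (Real.exp (r * (ε / 2))) ∂μ :=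
          (setLIntegral_const _ _).symm
      _ ≤ ∫⁻ y in {y : E | ε / 2 ≤ ⟪w, y⟫}, ENNReal.ofReal (Real.exp ⟪X (φ n), y⟫) ∂μ := by
          refine setLIntegral_mono (measExp _) fun y hy => ?_
          have hy' : ε / 2 ≤ ⟪w, y⟫ := hy
          have hiy : r * (ε / 2) ≤ ⟪X (φ n), y⟫ := by
            rw [hXw, real_inner_smul_left]
            exact mul_le_mul_of_nonneg_left hy' hrpos.le
          exact ENNReal.ofReal_le_ofReal (Real.exp_le_exp.2 hiy)
      _ ≤ laplace μ (X (φ n)) := setLIntegral_le_lintegral _ _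
      _ ≤ 2 := hXl _
  have h2 : ENNReal.ofReal (Real.exp (r * (ε / 2)) * a) ≤ ENNReal.ofReal 2 := by
    rw [ENNReal.ofReal_mul (Real.exp_pos _).le, ha, ENNReal.ofReal_toReal hδtop]
    simpa [ENNReal.ofReal_ofNat] using hlow
  have h3 : Real.exp (r * (ε / 2)) * a ≤ 2 :=
    (ENNReal.ofReal_le_ofReal_iff (by norm_num)).1 h2
  have hrn : (n₁ : ℝ) ≤ r := by
    have h4 : ((φ n : ℕ) : ℝ) + 1 ≤ r := hXn (φ n)
    have h5 : (n : ℕ) ≤ φ n := hφ.le_apply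
    have h6 : (n₁ : ℕ) ≤ n := le_max_right _ _
    have : ((n₁ : ℕ) : ℝ) ≤ ((φ n : ℕ) : ℝ) := Nat.cast_le.2 (h6.trans h5)
    linarith
  have hlog : Real.log (2 / a) < r * (ε / 2) := by
    have := (div_lt_iff₀ (by positivity : (0:ℝ) < ε / 2)).1 hn₁
    nlinarith
  have hexp : 2 / a < Real.exp (r * (ε / 2)) := by
    calc 2 / a = Real.exp (Real.log (2 / a)) := (Real.exp_log (by positivity)).symm
      _ < Real.exp (r * (ε / 2)) := Real.exp_lt_exp.2 hlog
  have : 2 < Real.exp (r * (ε / 2)) * a := by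
    have := (div_lt_iff₀ hapos).1 hexp
    linarith
  linarith

end helpers

/-- **Lemma (existence of a global minimum)**: if `μ` satisfies (H1) and has all `C`-exponential
moments, then `L_μ` attains a global minimum on the closed convex cone `C` if and only if there
is no `u ∈ C \ {0}` with `μ(u⁻) = 1`. -/
theorem laplace_attains_min_iff_no_halfspace
    {d : ℕ} (hd : 1 ≤ d)
    (C : Set (EuclideanSpace ℝ (Fin d)))
    (hCclosed : IsClosed C) (hCconvex : Convex ℝ C)
    (hCcone : ∀ c : ℝ, 0 ≤ c → ∀ x ∈ C, c • x ∈ C)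
    (hCne : C.Nonempty)
    (μ : Measure (EuclideanSpace ℝ (Fin d))) [IsProbabilityMeasure μ]
    -- (H1)
    (hH1 : ∀ u : EuclideanSpace ℝ (Fin d), u ≠ 0 → μ {y | ⟪u, y⟫ = 0} < 1)
    (hfin : ∀ x ∈ C, laplace μ x < ⊤) :
    (∃ x₀ ∈ C, ∀ x ∈ C, laplace μ x₀ ≤ laplace μ x) ↔
      ¬ ∃ u ∈ C, u ≠ 0 ∧ μ {y | ⟪u, y⟫ ≤ 0} = 1 := by
  constructor
  · rintro ⟨x₀, hx₀C, hmin⟩ ⟨u, huC, hu0, hμu⟩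
    -- set-up
    have hucont : Continuous fun y : EuclideanSpace ℝ (Fin d) => ⟪u, y⟫ :=
      continuous_const.inner continuous_id
    have hAmeas : MeasurableSet {y : EuclideanSpace ℝ (Fin d) | ⟪u, y⟫ ≤ 0} :=
      measurableSet_le hucont.measurable measurable_const
    have hZmeas : MeasurableSet {y : EuclideanSpace ℝ (Fin d) | ⟪u, y⟫ = 0} :=
      hucont.measurable (measurableSet_singleton 0)
    have hae : ∀ᵐ y ∂μ, ⟪u, y⟫ ≤ 0 := by
      rw [ae_iff]
      have : {y : EuclideanSpace ℝ (Fin d) | ¬ ⟪u, y⟫ ≤ 0} =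
          {y : EuclideanSpace ℝ (Fin d) | ⟪u, y⟫ ≤ 0}ᶜ := by
        ext y; simp
      rw [this, prob_compl_eq_zero_iff hAmeas]
      exact hμu
    set f : ℕ → EuclideanSpace ℝ (Fin d) → ℝ≥0∞ :=
      fun n y => ENNReal.ofReal (Real.exp ⟪x₀ + (n : ℝ) • u, y⟫) with hf
    have hinner : ∀ (n : ℕ) (y : EuclideanSpace ℝ (Fin d)),
        ⟪x₀ + (n : ℝ) • u, y⟫ = ⟪x₀, y⟫ + (n : ℝ) * ⟪u, y⟫ := by
      intro n y
      rw [inner_add_left, real_inner_smul_left]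
    set F : EuclideanSpace ℝ (Fin d) → ℝ≥0∞ :=
      Set.indicator {y : EuclideanSpace ℝ (Fin d) | ⟪u, y⟫ = 0}
        (fun y => ENNReal.ofReal (Real.exp ⟪x₀, y⟫)) with hF
    have hmem : ∀ n : ℕ, x₀ + (n : ℝ) • u ∈ C := fun n =>
      cone_add_mem hCconvex hCcone hx₀C (hCcone _ (Nat.cast_nonneg n) _ huC)
    have htend : Tendsto (fun n => ∫⁻ y, f n y ∂μ) atTop (𝓝 (∫⁻ y, F y ∂μ)) := by
      refine lintegral_tendsto_of_tendsto_of_antitone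
        (fun n => (measExp _).aemeasurable) ?_ ?_ ?_
      · filter_upwards [hae] with y hy
        intro m k hmk
        simp only [hf, hinner]
        refine ENNReal.ofReal_le_ofReal (Real.exp_le_exp.2 ?_)
        have : (k : ℝ) * ⟪u, y⟫ ≤ (m : ℝ) * ⟪u, y⟫ :=
          mul_le_mul_of_nonpos_right (Nat.cast_le.2 hmk) hy
        linarith
      · have h0 : ∫⁻ y, f 0 y ∂μ = laplace μ x₀ := by
          simp only [hf, Nat.cast_zero, zero_smul, add_zero]
          rfl
        rw [h0]
        exact (hfin x₀ hx₀C).ne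
      · filter_upwards [hae] with y hy
        rcases eq_or_lt_of_le hy with h0 | hneg
        · have hFy : F y = ENNReal.ofReal (Real.exp ⟪x₀, y⟫) := by
            rw [hF, Set.indicator_of_mem (show y ∈ {y : EuclideanSpace ℝ (Fin d) | ⟪u, y⟫ = 0} from h0)]
          have : ∀ n : ℕ, f n y = ENNReal.ofReal (Real.exp ⟪x₀, y⟫) := by
            intro n; simp only [hf, hinner, h0, mul_zero, add_zero]
          simp only [this, hFy]
          exact tendsto_const_nhds
        · have hFy : F y = 0 := by
            rw [hF, Set.indicator_of_notMem (by simpa using hneg.ne)]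
          rw [hFy]
          have hfny : ∀ n : ℕ, f n y =
              ENNReal.ofReal (Real.exp ⟪x₀, y⟫ * (Real.exp ⟪u, y⟫) ^ n) := by
            intro n
            simp only [hf, hinner]
            rw [Real.exp_add, Real.exp_nat_mul]
          simp only [hfny]
          have hlt1 : Real.exp ⟪u, y⟫ < 1 := by
            rw [← Real.exp_zero]
            exact Real.exp_lt_exp.2 hneg
          have hpow : Tendsto (fun n : ℕ => Real.exp ⟪x₀, y⟫ * (Real.exp ⟪u, y⟫) ^ n)
              atTop (𝓝 0) := by
            have := tendsto_pow_atTop_nhds_zero_of_lt_one (Real.exp_pos _).le hlt1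
            simpa using this.const_mul (Real.exp ⟪x₀, y⟫)
          have := (ENNReal.continuous_ofReal.tendsto 0).comp hpow
          simpa [Function.comp_def] using this
    have hlaplace : ∀ n : ℕ, ∫⁻ y, f n y ∂μ = laplace μ (x₀ + (n : ℝ) • u) := fun n => rfl
    have hlb : laplace μ x₀ ≤ ∫⁻ y, F y ∂μ :=
      ge_of_tendsto' htend fun n => by rw [hlaplace]; exact hmin _ (hmem n)
    -- now show ∫ F < laplace μ x₀
    have hFeq : ∫⁻ y, F y ∂μ =
        ∫⁻ y in {y : EuclideanSpace ℝ (Fin d) | ⟪u, y⟫ = 0},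
          ENNReal.ofReal (Real.exp ⟪x₀, y⟫) ∂μ := by
      rw [hF, lintegral_indicator hZmeas]
    have hsplit : laplace μ x₀ =
        (∫⁻ y in {y : EuclideanSpace ℝ (Fin d) | ⟪u, y⟫ = 0},
          ENNReal.ofReal (Real.exp ⟪x₀, y⟫) ∂μ) +
        ∫⁻ y in {y : EuclideanSpace ℝ (Fin d) | ⟪u, y⟫ = 0}ᶜ,
          ENNReal.ofReal (Real.exp ⟪x₀, y⟫) ∂μ :=
      (lintegral_add_compl _ hZmeas).symm
    have hcpos : 0 < ∫⁻ y in {y : EuclideanSpace ℝ (Fin d) | ⟪u, y⟫ = 0}ᶜ,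
        ENNReal.ofReal (Real.exp ⟪x₀, y⟫) ∂μ := by
      rw [lintegral_pos_iff_support (measExp x₀)]
      have hsup : Function.support
          (fun y : EuclideanSpace ℝ (Fin d) => ENNReal.ofReal (Real.exp ⟪x₀, y⟫)) =
          Set.univ := by
        ext y
        simp [Function.mem_support, (ENNReal.ofReal_pos.2 (Real.exp_pos _)).ne']
      rw [hsup, Measure.restrict_apply_univ]
      rw [prob_compl_eq_one_sub hZmeas]
      exact tsub_pos_of_lt (hH1 u hu0)
    have hfintop : (∫⁻ y in {y : EuclideanSpace ℝ (Fin d) | ⟪u, y⟫ = 0},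
        ENNReal.ofReal (Real.exp ⟪x₀, y⟫) ∂μ) ≠ ⊤ := by
      refine ne_top_of_le_ne_top (hfin x₀ hx₀C).ne ?_
      exact setLIntegral_le_lintegral _ _
    have hFlt : ∫⁻ y, F y ∂μ < laplace μ x₀ := by
      rw [hFeq, hsplit]
      exact ENNReal.lt_add_right hfintop hcpos.ne'
    exact absurd hlb (not_le.2 hFlt)
  · intro hno
    have h0C : (0 : EuclideanSpace ℝ (Fin d)) ∈ C := by
      obtain ⟨z, hz⟩ := hCne
      simpa using hCcone 0 le_rfl z hz
    set m : ℝ≥0∞ := sInf (laplace μ '' C) with hm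
    have hm1 : m ≤ 1 := by
      rw [← laplace_zero μ]
      exact sInf_le ⟨0, h0C, rfl⟩
    have hmtop : m ≠ ⊤ := (lt_of_le_of_lt hm1 ENNReal.one_lt_top).ne
    obtain ⟨R, hR⟩ := exists_radius hCclosed hCcone μ hno
    have hsel : ∀ n : ℕ, ∃ x ∈ C, laplace μ x ≤ m + ((n : ℝ≥0∞) + 1)⁻¹ := by
      intro n
      have hlt : m < m + ((n : ℝ≥0∞) + 1)⁻¹ :=
        ENNReal.lt_add_right hmtop (ENNReal.inv_ne_zero.2 (by simp))
      obtain ⟨b, hb, hblt⟩ := sInf_lt_iff.1 (hm ▸ hlt)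
      obtain ⟨x, hxC, rfl⟩ := hb
      exact ⟨x, hxC, hblt.le⟩
    choose x hxC hxle using hsel
    have hx2 : ∀ n, laplace μ (x n) ≤ 2 := by
      intro n
      refine (hxle n).trans ?_
      have h1 : ((n : ℝ≥0∞) + 1)⁻¹ ≤ 1 := by
        simp [ENNReal.inv_le_one]
      calc m + ((n : ℝ≥0∞) + 1)⁻¹ ≤ 1 + 1 := add_le_add hm1 h1
        _ = 2 := one_add_one_eq_two
    have hxball : ∀ n, x n ∈ C ∩ Metric.closedBall 0 R := by
      intro n
      refine ⟨hxC n, ?_⟩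
      rw [Metric.mem_closedBall, dist_zero_right]
      by_contra hcon
      push_neg at hcon
      exact absurd (hx2 n) (not_le.2 (hR _ (hxC n) hcon.le))
    have hKc : IsCompact (C ∩ Metric.closedBall (0 : EuclideanSpace ℝ (Fin d)) R) :=
      (isCompact_closedBall 0 R).inter_left hCclosed
    obtain ⟨x₀, hx₀K, φ, hφ, hconv⟩ := hKc.tendsto_subseq hxball
    refine ⟨x₀, hx₀K.1, fun z hz => ?_⟩
    have hx₀m : laplace μ x₀ ≤ m := by
      refine ENNReal.le_of_forall_pos_le_add fun ε hε hmlt => ?_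
      refine (laplace_le_liminf μ hconv).trans ?_
      refine liminf_le_of_frequently_le ?_
      refine Eventually.frequently ?_
      obtain ⟨N, hN⟩ := ENNReal.exists_inv_nat_lt (by exact_mod_cast hε.ne' : (ε : ℝ≥0∞) ≠ 0)
      filter_upwards [eventually_ge_atTop N] with n hn
      refine (hxle (φ n)).trans (add_le_add_right ?_ m)
      have h1 : ((N : ℝ≥0∞))⁻¹ ≤ (ε : ℝ≥0∞) := hN.le
      refine le_trans ?_ h1
      refine ENNReal.inv_le_inv.2 ?_
      have : (N : ℝ≥0∞) ≤ (n : ℝ≥0∞) := by exact_mod_cast hn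
      refine this.trans ?_
      have : (n : ℝ≥0∞) ≤ (φ n : ℝ≥0∞) := by exact_mod_cast hφ.le_apply
      exact this.trans (le_self_add)
    exact hx₀m.trans (sInf_le ⟨z, hz, rfl⟩)
end

section
/- Let 0 < q ≤ 1/2 and p = 1 − 2q ≥ 0, and let (S_n)_{n≥0} be the random walk on ℤ² started at x with i.i.d. increments equal to (1,−1) with probability q, (−1,1) with probability q, and (−1,−1) with probability p. Let Q = {(i,j) ∈ ℤ² : i ≥ 0, j ≥ 0} and τ_Q := inf{n ≥ 1 : S_n ∉ Q}. Then for every N ≥ 1 and every starting point x ∈ D_{2N} := {(i,j) ∈ Q : i + j = 2N}, one has lim_{n→∞} (P^x[τ_Q > n])^{1/n} = 2q·cos(π/(2N+2)). -/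
open MeasureTheory ProbabilityTheory Filter
open scoped ENNReal Topology

section Aux
open Real MeasureTheory ProbabilityTheory Filter


namespace QPWalk

/-- membership indicator of the quarter plane, as a real number -/
noncomputable def indQ (z : ℤ × ℤ) : ℝ := if 0 ≤ z.1 ∧ 0 ≤ z.2 then 1 else 0

lemma indQ_nonneg (z : ℤ × ℤ) : 0 ≤ indQ z := by unfold indQ; split <;> norm_num
lemma indQ_le_one (z : ℤ × ℤ) : indQ z ≤ 1 := by unfold indQ; split <;> norm_num

def sA : ℤ × ℤ := (1, -1)
def sB : ℤ × ℤ := (-1, 1)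
def sC : ℤ × ℤ := (-1, -1)

/-- survival probability of the walk, as a deterministic recursion -/
noncomputable def g (q : ℝ) : ℕ → ℤ × ℤ → ℝ
  | 0, _ => 1
  | n+1, y => q * (indQ (y + sA) * g q n (y + sA)) + q * (indQ (y + sB) * g q n (y + sB))
      + (1 - 2*q) * (indQ (y + sC) * g q n (y + sC))

lemma g_nonneg {q : ℝ} (hq0 : 0 ≤ q) (hq : q ≤ 1/2) : ∀ n y, 0 ≤ g q n y := by
  intro n
  induction n with
  | zero => intro y; simp [g]
  | succ n ih =>
    intro y
    have h1 : (0:ℝ) ≤ 1 - 2*q := by linarith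
    simp only [g]
    have := ih (y + sA); have := ih (y + sB); have := ih (y + sC)
    have := indQ_nonneg (y + sA); have := indQ_nonneg (y + sB); have := indQ_nonneg (y + sC)
    positivity

/-- the exponential decay rate on the diagonal of index `L` -/
noncomputable def lam (q : ℝ) (L : ℕ) : ℝ := 2 * q * Real.cos (π / (L + 2))

lemma lam_nonneg {q : ℝ} (hq0 : 0 ≤ q) (L : ℕ) : 0 ≤ lam q L := by
  have h2 : (0:ℝ) < (L:ℝ) + 2 := by positivity
  have h1 : 0 ≤ π / ((L:ℝ) + 2) := by positivity
  have h3 : π / ((L:ℝ) + 2) ≤ π / 2 := by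
    apply div_le_div_of_nonneg_left pi_pos.le (by norm_num) (by push_cast; linarith [Nat.cast_nonneg (α := ℝ) L])
  have := Real.cos_nonneg_of_mem_Icc (x := π / ((L:ℝ)+2)) ⟨by linarith, h3⟩
  unfold lam; positivity

lemma lam_pos {q : ℝ} (hq0 : 0 < q) {L : ℕ} (hL : 1 ≤ L) : 0 < lam q L := by
  have h2 : (0:ℝ) < (L:ℝ) + 2 := by positivity
  have h1 : 0 < π / ((L:ℝ) + 2) := by positivity
  have h3 : π / ((L:ℝ) + 2) < π / 2 := by
    apply div_lt_div_of_pos_left pi_pos (by norm_num)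
    have : (1:ℝ) ≤ (L:ℝ) := by exact_mod_cast hL
    linarith
  have := Real.cos_pos_of_mem_Ioo (x := π / ((L:ℝ)+2)) ⟨by linarith, h3⟩
  unfold lam; positivity

lemma lam_lt {q : ℝ} (hq0 : 0 < q) {L : ℕ} (hL : 2 ≤ L) : lam q (L - 2) < lam q L := by
  have hc : ((L - 2 : ℕ) : ℝ) = (L:ℝ) - 2 := by
    have : (2:ℕ) ≤ L := hL
    push_cast [Nat.cast_sub this]; ring
  unfold lam
  rw [hc]
  have hL2 : (2:ℝ) ≤ (L:ℝ) := by exact_mod_cast hL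
  have h1 : (0:ℝ) < (L:ℝ) - 2 + 2 := by linarith
  have h2 : (0:ℝ) < (L:ℝ) + 2 := by linarith
  have hlt : π / ((L:ℝ) + 2) < π / ((L:ℝ) - 2 + 2) := by
    apply div_lt_div_of_pos_left pi_pos h1; linarith
  have hle : π / ((L:ℝ) - 2 + 2) ≤ π := by
    rw [div_le_iff₀ h1]; nlinarith [pi_pos]
  have := Real.cos_lt_cos_of_nonneg_of_le_pi (by positivity) hle hlt
  have h2q : (0:ℝ) < 2*q := by linarith
  nlinarith

/-- `sin` is at least `sin θ` on `[θ, π - θ]`. -/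
lemma sin_ge_sin_of_mem {θ t : ℝ} (hθ0 : 0 < θ) (hθ : θ ≤ π/2) (h1 : θ ≤ t) (h2 : t ≤ π - θ) :
    Real.sin θ ≤ Real.sin t := by
  have mono := Real.strictMonoOn_sin.monotoneOn
  rcases le_or_gt t (π/2) with h | h
  · exact mono ⟨by linarith, hθ⟩ ⟨by linarith, h⟩ h1
  · rw [← Real.sin_pi_sub t]
    exact mono ⟨by linarith, hθ⟩ ⟨by linarith, by linarith⟩ (by linarith)

section diag

variable {q : ℝ} (L : ℕ)

/-- angle for diagonal L -/
noncomputable def th (L : ℕ) : ℝ := π / (L + 2)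

lemma th_pos : 0 < th L := by
  have : (0:ℝ) < (L:ℝ) + 2 := by positivity
  unfold th; positivity

lemma th_le : th L ≤ π / 2 := by
  unfold th
  apply div_le_div_of_nonneg_left pi_pos.le (by norm_num)
  have := Nat.cast_nonneg (α := ℝ) L; linarith

/-- the sine eigenvector -/
noncomputable def w (L : ℕ) (i : ℤ) : ℝ := Real.sin (((i:ℝ) + 1) * th L)

lemma w_nonneg {i : ℤ} (h1 : -1 ≤ i) (h2 : i ≤ L + 1) : 0 ≤ w L i := by
  apply Real.sin_nonneg_of_nonneg_of_le_pi
  · have : (-1:ℝ) ≤ (i:ℝ) := by exact_mod_cast h1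
    have := (th_pos L).le
    nlinarith
  · have hi : (i:ℝ) ≤ (L:ℝ) + 1 := by exact_mod_cast h2
    have h0 := th_pos L
    have : ((i:ℝ) + 1) * th L ≤ ((L:ℝ) + 2) * th L := by nlinarith
    have hL : ((L:ℝ) + 2) * th L = π := by
      unfold th; field_simp
    linarith

lemma w_le_one (i : ℤ) : w L i ≤ 1 := Real.sin_le_one _

lemma w_ge {i : ℤ} (h1 : 0 ≤ i) (h2 : i ≤ L) : Real.sin (th L) ≤ w L i := by
  apply sin_ge_sin_of_mem (th_pos L) (th_le L)
  · have : (0:ℝ) ≤ (i:ℝ) := by exact_mod_cast h1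
    nlinarith [th_pos L]
  · have hi : (i:ℝ) ≤ (L:ℝ) := by exact_mod_cast h2
    have hL : ((L:ℝ) + 2) * th L = π := by unfold th; field_simp
    nlinarith [th_pos L]

lemma w_pos {i : ℤ} (h1 : 0 ≤ i) (h2 : i ≤ L) : 0 < w L i :=
  lt_of_lt_of_le (by
    apply Real.sin_pos_of_pos_of_lt_pi (th_pos L)
    have := th_le L
    linarith [pi_pos]) (w_ge L h1 h2)

lemma sinth_pos : 0 < Real.sin (th L) := by
  apply Real.sin_pos_of_pos_of_lt_pi (th_pos L)
  have := th_le L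
  linarith [pi_pos]

/-- the key trigonometric identity -/
lemma w_rec (i : ℤ) : w L (i + 1) + w L (i - 1) = 2 * Real.cos (th L) * w L i := by
  unfold w
  push_cast
  have e1 : ((i:ℝ) + 1 + 1) * th L = ((i:ℝ) + 1) * th L + th L := by ring
  have e2 : ((i:ℝ) - 1 + 1) * th L = ((i:ℝ) + 1) * th L - th L := by ring
  rw [e1, e2, Real.sin_add, Real.sin_sub]
  ring

lemma lam_eq : lam q L = 2 * q * Real.cos (th L) := rfl

lemma w_top : w L ((L:ℤ) + 1) = 0 := by
  unfold w
  have h2 : ((L:ℝ) + 2) ≠ 0 := by positivity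
  have : ((((L:ℕ):ℤ):ℝ) + 1 + 1) * th L = π := by
    unfold th; push_cast; field_simp; ring
  push_cast at this ⊢
  rw [this, Real.sin_pi]

lemma w_bot : w L (-1) = 0 := by unfold w; norm_num

end diag

/-- Lower bound: survival on the diagonal `L` dominates `lam^n` times the eigenvector. -/
lemma g_lower {q : ℝ} (hq0 : 0 ≤ q) (hq : q ≤ 1/2) (L : ℕ) :
    ∀ n (y : ℤ × ℤ), 0 ≤ y.1 → 0 ≤ y.2 → y.1 + y.2 = L →
      (lam q L)^n * w L y.1 ≤ g q n y := by
  intro n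
  induction n with
  | zero =>
    intro y h1 h2 h3
    simpa [g] using w_le_one L y.1
  | succ n ih =>
    intro y h1 h2 h3
    have hw1 : (lam q L)^n * w L (y.1 + 1) ≤ indQ (y + sA) * g q n (y + sA) := by
      by_cases hA : 0 ≤ (y + sA).1 ∧ 0 ≤ (y + sA).2
      · have : indQ (y + sA) = 1 := if_pos hA
        rw [this, one_mul]
        have := ih (y + sA) hA.1 hA.2 (by simp only [sA, Prod.fst_add, Prod.snd_add] at *; omega)
        simpa [sA] using this
      · -- then y.2 = 0, so y.1 = L and w L (L+1) = 0
        have hy2 : y.2 = 0 := by simp only [sA, Prod.fst_add, Prod.snd_add] at hA; omega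
        have hy1 : y.1 = (L:ℤ) := by omega
        have : indQ (y + sA) = 0 := if_neg hA
        rw [this, zero_mul, hy1]
        simp [w_top L]
    have hw2 : (lam q L)^n * w L (y.1 - 1) ≤ indQ (y + sB) * g q n (y + sB) := by
      by_cases hB : 0 ≤ (y + sB).1 ∧ 0 ≤ (y + sB).2
      · have : indQ (y + sB) = 1 := if_pos hB
        rw [this, one_mul]
        have := ih (y + sB) hB.1 hB.2 (by simp only [sB, Prod.fst_add, Prod.snd_add] at *; omega)
        simpa [sB, sub_eq_add_neg] using this
      · have hy1 : y.1 = 0 := by simp only [sB, Prod.fst_add, Prod.snd_add] at hB; omega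
        have : indQ (y + sB) = 0 := if_neg hB
        rw [this, zero_mul, hy1]
        show (lam q L)^n * w L (-1) ≤ 0
        rw [w_bot]; norm_num
    have hC : 0 ≤ (1 - 2*q) * (indQ (y + sC) * g q n (y + sC)) := by
      have := g_nonneg hq0 hq n (y + sC); have := indQ_nonneg (y + sC)
      have : (0:ℝ) ≤ 1 - 2*q := by linarith
      positivity
    have key : q * ((lam q L)^n * w L (y.1 + 1)) + q * ((lam q L)^n * w L (y.1 - 1))
        = (lam q L)^(n+1) * w L y.1 := by
      have hrec := w_rec L y.1
      have e1 : q * ((lam q L)^n * w L (y.1 + 1)) + q * ((lam q L)^n * w L (y.1 - 1))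
          = (lam q L)^n * (q * (w L (y.1 + 1) + w L (y.1 - 1))) := by ring
      rw [e1, hrec, lam_eq, pow_succ]
      ring
    calc (lam q L)^(n+1) * w L y.1
        = q * ((lam q L)^n * w L (y.1 + 1)) + q * ((lam q L)^n * w L (y.1 - 1)) := key.symm
      _ ≤ q * (indQ (y + sA) * g q n (y + sA)) + q * (indQ (y + sB) * g q n (y + sB)) := by
          have := mul_le_mul_of_nonneg_left hw1 hq0
          have := mul_le_mul_of_nonneg_left hw2 hq0
          linarith
      _ ≤ g q (n+1) y := by
          simp only [g]; linarith



/-- Core upper bound on one diagonal, given a bound on the diagonal two below. -/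
lemma g_upper_core {q : ℝ} (hq0 : 0 < q) (hq : q ≤ 1/2) (L : ℕ) (hL : 1 ≤ L)
    (C' lam' : ℝ) (hC' : 0 ≤ C') (hlam'0 : 0 ≤ lam') (hlt : lam' < lam q L)
    (Hlow : ∀ n (y : ℤ × ℤ), 0 ≤ y.1 → 0 ≤ y.2 → y.1 + y.2 = (L:ℤ) - 2 →
        g q n y ≤ C' * lam'^n) :
    ∃ C, 0 ≤ C ∧ ∀ n (y : ℤ × ℤ), 0 ≤ y.1 → 0 ≤ y.2 → y.1 + y.2 = L →
      g q n y ≤ C * (lam q L)^n := by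
  set lm := lam q L with hlm
  set m := Real.sin (th L) with hmdef
  have hm : 0 < m := sinth_pos L
  have hlmpos : 0 < lm := lam_pos hq0 hL
  have hgap : 0 < lm - lam' := by linarith
  set D := (1 - 2*q) * C' with hD
  have hD0 : 0 ≤ D := by
    have : (0:ℝ) ≤ 1 - 2*q := by linarith
    positivity
  set B : ℕ → ℝ := fun n => (lm^n + D * ((lm^n - lam'^n)/(lm - lam')))/m with hB
  have hBn0 : ∀ n, 0 ≤ B n := by
    intro n
    have h1 : lam'^n ≤ lm^n := pow_le_pow_left₀ hlam'0 hlt.le n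
    have h2 : 0 ≤ (lm^n - lam'^n)/(lm - lam') := by
      apply div_nonneg (by linarith) hgap.le
    have : 0 ≤ lm^n := by positivity
    have : 0 ≤ lm^n + D * ((lm^n - lam'^n)/(lm - lam')) := by nlinarith
    exact div_nonneg this hm.le
  have main : ∀ n (y : ℤ × ℤ), 0 ≤ y.1 → 0 ≤ y.2 → y.1 + y.2 = L →
      g q n y ≤ B n * w L y.1 := by
    intro n
    induction n with
    | zero =>
      intro y h1 h2 h3
      have hB0 : B 0 = 1/m := by simp [hB]
      have hge : m ≤ w L y.1 := w_ge L h1 (by omega)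
      show (1:ℝ) ≤ B 0 * w L y.1
      rw [hB0, div_mul_eq_mul_div, le_div_iff₀ hm, one_mul, one_mul]
      exact hge
    | succ n ih =>
      intro y h1 h2 h3
      have hwa : indQ (y + sA) * g q n (y + sA) ≤ B n * w L (y.1 + 1) := by
        by_cases hA : 0 ≤ (y + sA).1 ∧ 0 ≤ (y + sA).2
        · have hi : indQ (y + sA) = 1 := if_pos hA
          rw [hi, one_mul]
          have := ih (y + sA) hA.1 hA.2 (by simp only [sA, Prod.fst_add, Prod.snd_add] at *; omega)
          simpa [sA] using this
        · have hi : indQ (y + sA) = 0 := if_neg hA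
          rw [hi, zero_mul]
          have hw := w_nonneg L (i := y.1 + 1) (by omega) (by omega)
          exact mul_nonneg (hBn0 n) hw
      have hwb : indQ (y + sB) * g q n (y + sB) ≤ B n * w L (y.1 - 1) := by
        by_cases hBc : 0 ≤ (y + sB).1 ∧ 0 ≤ (y + sB).2
        · have hi : indQ (y + sB) = 1 := if_pos hBc
          rw [hi, one_mul]
          have := ih (y + sB) hBc.1 hBc.2 (by simp only [sB, Prod.fst_add, Prod.snd_add] at *; omega)
          simpa [sB, sub_eq_add_neg] using this
        · have hi : indQ (y + sB) = 0 := if_neg hBc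
          rw [hi, zero_mul]
          have hw := w_nonneg L (i := y.1 - 1) (by omega) (by omega)
          exact mul_nonneg (hBn0 n) hw
      have hwc : indQ (y + sC) * g q n (y + sC) ≤ C' * lam'^n := by
        by_cases hCc : 0 ≤ (y + sC).1 ∧ 0 ≤ (y + sC).2
        · have hi : indQ (y + sC) = 1 := if_pos hCc
          rw [hi, one_mul]
          exact Hlow n (y + sC) hCc.1 hCc.2
            (by simp only [sC, Prod.fst_add, Prod.snd_add] at *; omega)
        · have hi : indQ (y + sC) = 0 := if_neg hCc
          rw [hi, zero_mul]
          positivity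
      have hp : (0:ℝ) ≤ 1 - 2*q := by linarith
      have step1 : g q (n+1) y ≤
          q * (B n * w L (y.1 + 1)) + q * (B n * w L (y.1 - 1)) + (1 - 2*q) * (C' * lam'^n) := by
        simp only [g]
        have t1 := mul_le_mul_of_nonneg_left hwa hq0.le
        have t2 := mul_le_mul_of_nonneg_left hwb hq0.le
        have t3 := mul_le_mul_of_nonneg_left hwc hp
        linarith
      have step2 : q * (B n * w L (y.1 + 1)) + q * (B n * w L (y.1 - 1)) + (1 - 2*q) * (C' * lam'^n)
          = B n * (lm * w L y.1) + D * lam'^n := by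
        have hrec := w_rec L y.1
        have e1 : q * (B n * w L (y.1 + 1)) + q * (B n * w L (y.1 - 1))
            = B n * (q * (w L (y.1 + 1) + w L (y.1 - 1))) := by ring
        rw [e1, hrec, hlm, lam_eq, hD]
        ring
      have hwy : m ≤ w L y.1 := w_ge L h1 (by omega)
      have step3 : B n * (lm * w L y.1) + D * lam'^n ≤ B (n+1) * w L y.1 := by
        have hDl : 0 ≤ D * lam'^n := by positivity
        have key : D * lam'^n ≤ (D * lam'^n / m) * w L y.1 := by
          rw [div_mul_eq_mul_div, le_div_iff₀ hm]
          exact mul_le_mul_of_nonneg_left hwy hDl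
        have halg : B n * lm + D * lam'^n / m = B (n+1) := by
          simp only [hB]
          rw [pow_succ lm, pow_succ lam']
          field_simp
          ring
        calc B n * (lm * w L y.1) + D * lam'^n
            ≤ B n * lm * w L y.1 + (D * lam'^n / m) * w L y.1 := by
              rw [mul_assoc] at *; linarith
          _ = (B n * lm + D * lam'^n / m) * w L y.1 := by ring
          _ = B (n+1) * w L y.1 := by rw [halg]
      linarith
  refine ⟨(1 + D/(lm - lam'))/m, ?_, ?_⟩
  · have : 0 ≤ D/(lm - lam') := div_nonneg hD0 hgap.le
    positivity
  · intro n y h1 h2 h3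
    have h4 := main n y h1 h2 h3
    have h5 : B n * w L y.1 ≤ B n := by
      have := w_le_one L y.1
      have hw0 := w_nonneg L (i := y.1) (by omega) (by omega)
      nlinarith [hBn0 n]
    have h6 : B n ≤ (1 + D/(lm - lam'))/m * lm^n := by
      have h7 : lam'^n ≤ lm^n := pow_le_pow_left₀ hlam'0 hlt.le n
      have h9 : (lm^n - lam'^n)/(lm - lam') ≤ lm^n/(lm - lam') := by
        gcongr
        · linarith [pow_nonneg hlam'0 n]
      have h10 := mul_le_mul_of_nonneg_left h9 hD0
      have e : (1 + D/(lm - lam'))*lm^n = lm^n + D*(lm^n/(lm - lam')) := by ring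
      have hnum : lm^n + D * ((lm^n - lam'^n)/(lm - lam')) ≤ (1 + D/(lm - lam')) * lm^n := by
        rw [e]; linarith
      simp only [hB]
      rw [div_mul_eq_mul_div, div_le_div_iff₀ hm hm]
      exact mul_le_mul_of_nonneg_right hnum hm.le
    linarith

lemma lam_zero {q : ℝ} : lam q 0 = 0 := by
  unfold lam
  norm_num [Real.cos_pi_div_two]

lemma g_upper {q : ℝ} (hq0 : 0 < q) (hq : q ≤ 1/2) : ∀ L : ℕ, ∃ C, 0 ≤ C ∧
    ∀ n (y : ℤ × ℤ), 0 ≤ y.1 → 0 ≤ y.2 → y.1 + y.2 = L →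
      g q n y ≤ C * (lam q L)^n := by
  intro L
  induction L using Nat.strong_induction_on with
  | _ L ih =>
    match L, ih with
    | 0, _ =>
      refine ⟨1, zero_le_one, ?_⟩
      intro n y h1 h2 h3
      have hy : y = (0, 0) := by
        have : y.1 = 0 ∧ y.2 = 0 := by omega
        exact Prod.ext this.1 this.2
      subst hy
      rw [lam_zero]
      cases n with
      | zero => simp [g]
      | succ n =>
        have hz : g q (n+1) ((0:ℤ), (0:ℤ)) = 0 := by
          simp [g, indQ, sA, sB, sC]
        rw [hz]
        simp
    | 1, _ =>
      apply g_upper_core hq0 hq 1 le_rfl 0 0 le_rfl le_rfl (lam_pos hq0 le_rfl)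
      intro n y h1 h2 h3
      exfalso; omega
    | (L+2), ih =>
      obtain ⟨C', hC'0, hC'⟩ := ih L (by omega)
      have hlt : lam q L < lam q (L+2) := by
        have := lam_lt hq0 (L := L + 2) (by omega)
        simpa using this
      apply g_upper_core hq0 hq (L+2) (by omega) C' (lam q L) hC'0 (lam_nonneg hq0.le L) hlt
      intro n y h1 h2 h3
      exact hC' n y h1 h2 (by push_cast at h3 ⊢; omega)

section Prob

variable {Ω : Type} [MeasurableSpace Ω]

lemma prob_eq {q : ℝ} (hq0 : 0 ≤ q) (hq : q ≤ 1/2)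
    (P : Measure Ω) [IsProbabilityMeasure P]
    (X : ℕ → Ω → ℤ × ℤ) (hXmeas : ∀ n, Measurable (X n))
    (hXindep : iIndepFun X P)
    (hXlaw : ∀ j, Measure.map (X j) P
      = ENNReal.ofReal q • Measure.dirac ((1:ℤ), (-1:ℤ))
        + ENNReal.ofReal q • Measure.dirac (-1, 1)
        + ENNReal.ofReal (1 - 2 * q) • Measure.dirac (-1, -1)) :
    ∀ (n m : ℕ) (y : ℤ × ℤ),
      P {ω | ∀ k : ℕ, 1 ≤ k → k ≤ n →
          0 ≤ (y + ∑ i ∈ Finset.range k, X (m + i) ω).1 ∧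
          0 ≤ (y + ∑ i ∈ Finset.range k, X (m + i) ω).2}
        = ENNReal.ofReal (g q n y) := by
  intro n
  induction n with
  | zero =>
    intro m y
    have hset : {ω : Ω | ∀ k : ℕ, 1 ≤ k → k ≤ 0 →
        0 ≤ (y + ∑ i ∈ Finset.range k, X (m + i) ω).1 ∧
        0 ≤ (y + ∑ i ∈ Finset.range k, X (m + i) ω).2} = Set.univ := by
      ext ω
      simp only [Set.mem_setOf_eq, Set.mem_univ, iff_true]
      intro k hk1 hk0; omega
    rw [hset]
    simp [g]
  | succ n ih =>
    intro m y
    -- the laws of single steps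
    have hlaw : ∀ (s : Set (ℤ × ℤ)), MeasurableSet s → P ((X m) ⁻¹' s)
        = ((ENNReal.ofReal q • Measure.dirac ((1:ℤ), (-1:ℤ))
          + ENNReal.ofReal q • Measure.dirac (-1, 1)
          + ENNReal.ofReal (1 - 2 * q) • Measure.dirac (-1, -1) : Measure (ℤ × ℤ))) s := by
      intro s hs
      rw [← Measure.map_apply (hXmeas m) hs, hXlaw m]
    have hwA : P ((X m) ⁻¹' {sA}) = ENNReal.ofReal q := by
      rw [hlaw _ (measurableSet_singleton _)]
      simp [Measure.dirac_apply, Set.indicator_apply, sA, sB, sC, Prod.ext_iff]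
    have hwB : P ((X m) ⁻¹' {sB}) = ENNReal.ofReal q := by
      rw [hlaw _ (measurableSet_singleton _)]
      simp [Measure.dirac_apply, Set.indicator_apply, sA, sB, sC, Prod.ext_iff]
    have hwC : P ((X m) ⁻¹' {sC}) = ENNReal.ofReal (1 - 2*q) := by
      rw [hlaw _ (measurableSet_singleton _)]
      simp [Measure.dirac_apply, Set.indicator_apply, sA, sB, sC, Prod.ext_iff]
    have hwU : P ((X m) ⁻¹' ({sA, sB, sC} : Set (ℤ × ℤ))ᶜ) = 0 := by
      rw [hlaw _ (by
        exact (Set.to_countable _).measurableSet.compl)]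
      simp [Measure.dirac_apply, Set.indicator_apply, sA, sB, sC, Prod.ext_iff]
    -- the shifted tuple
    set Z : Ω → (Fin n → ℤ × ℤ) := fun ω i => X (m + 1 + (i : ℕ)) ω with hZdef
    have hZmeas : Measurable Z := measurable_pi_lambda _ (fun i => hXmeas _)
    -- independence of `X m` and `Z`
    have hindepZ : IndepFun (X m) Z P := by
      classical
      set T : Finset ℕ := Finset.image (fun i => m + 1 + i) (Finset.range n) with hT
      have hdisj : Disjoint ({m} : Finset ℕ) T := by
        simp only [Finset.disjoint_left, Finset.mem_singleton, hT, Finset.mem_image,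
          Finset.mem_range]
        rintro a rfl ⟨i, hi, hia⟩
        omega
      have h1 := hXindep.indepFun_finset {m} T hdisj hXmeas
      have hφ : Measurable (fun t : ↥({m} : Finset ℕ) → ℤ × ℤ =>
          t ⟨m, Finset.mem_singleton_self m⟩) := measurable_pi_apply _
      have hmemT : ∀ i : Fin n, m + 1 + (i : ℕ) ∈ T := by
        intro i
        simp only [hT, Finset.mem_image, Finset.mem_range]
        exact ⟨i, i.2, rfl⟩
      have hψ : Measurable (fun (t : ↥T → ℤ × ℤ) (i : Fin n) =>
          t ⟨m + 1 + (i : ℕ), hmemT i⟩) :=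
        measurable_pi_lambda _ (fun i => measurable_pi_apply _)
      exact h1.comp hφ hψ
    -- the sets describing survival after the first step
    set E : (ℤ × ℤ) → Set (Fin n → ℤ × ℤ) := fun v =>
      {t | (0 ≤ (y + v).1 ∧ 0 ≤ (y + v).2) ∧ ∀ k : ℕ, 1 ≤ k → k ≤ n →
        0 ≤ ((y + v) + ∑ i ∈ Finset.range k, (if h : i < n then t ⟨i, h⟩ else 0)).1 ∧
        0 ≤ ((y + v) + ∑ i ∈ Finset.range k, (if h : i < n then t ⟨i, h⟩ else 0)).2}
      with hEdef
    have hEmeas : ∀ v, MeasurableSet (E v) := fun v => (Set.to_countable _).measurableSet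
    -- the survival event
    set S : Set Ω := {ω | ∀ k : ℕ, 1 ≤ k → k ≤ n + 1 →
        0 ≤ (y + ∑ i ∈ Finset.range k, X (m + i) ω).1 ∧
        0 ≤ (y + ∑ i ∈ Finset.range k, X (m + i) ω).2} with hSdef
    -- dite sums are genuine sums
    have hdsum : ∀ (k : ℕ), k ≤ n → ∀ ω : Ω,
        (∑ i ∈ Finset.range k, (if h : i < n then Z ω ⟨i, h⟩ else 0))
          = ∑ i ∈ Finset.range k, X (m + 1 + i) ω := by
      intro k hk ω
      refine Finset.sum_congr rfl (fun i hi => ?_)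
      rw [dif_pos (lt_of_lt_of_le (Finset.mem_range.mp hi) hk)]
    -- rearranging the partial sums after the first step
    have hsum : ∀ (k : ℕ) (ω : Ω), y + ∑ i ∈ Finset.range (k + 1), X (m + i) ω
        = (y + X m ω) + ∑ i ∈ Finset.range k, X (m + 1 + i) ω := by
      intro k ω
      rw [Finset.sum_range_succ']
      have e1 : ∑ i ∈ Finset.range k, X (m + (i + 1)) ω
          = ∑ i ∈ Finset.range k, X (m + 1 + i) ω :=
        Finset.sum_congr rfl (fun i _ => by rw [show m + (i + 1) = m + 1 + i by omega])
      rw [e1, Nat.add_zero]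
      abel
    -- the key splitting identity
    have hkey : ∀ v : ℤ × ℤ, (X m) ⁻¹' {v} ∩ S = (X m) ⁻¹' {v} ∩ Z ⁻¹' (E v) := by
      intro v
      ext ω
      simp only [Set.mem_inter_iff, Set.mem_preimage, Set.mem_singleton_iff, hSdef, hEdef,
        Set.mem_setOf_eq]
      constructor
      · rintro ⟨hv, h⟩
        refine ⟨hv, ?_, ?_⟩
        · have h1 := h 1 le_rfl (by omega)
          rw [show (1:ℕ) = 0 + 1 from rfl, hsum 0 ω, hv] at h1
          simpa using h1
        · intro k hk1 hkn
          have h2 := h (k + 1) (by omega) (by omega)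
          rw [hsum k ω, hv] at h2
          rw [hdsum k hkn ω]
          exact h2
      · rintro ⟨hv, hin, h⟩
        refine ⟨hv, ?_⟩
        intro k hk1 hkn1
        cases k with
        | zero => omega
        | succ k' =>
          rw [hsum k' ω, hv]
          rcases Nat.eq_zero_or_pos k' with hk0 | hk0
          · subst hk0
            simpa using hin
          · have h3 := h k' hk0 (by omega)
            rw [hdsum k' (by omega) ω] at h3
            exact h3
      -- computing the probabilities of the pieces
    have hpiece : ∀ v : ℤ × ℤ, P (Z ⁻¹' (E v)) = ENNReal.ofReal (indQ (y + v) * g q n (y + v)) := by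
      intro v
      by_cases hin : 0 ≤ (y + v).1 ∧ 0 ≤ (y + v).2
      · have hE : Z ⁻¹' (E v) = {ω | ∀ k : ℕ, 1 ≤ k → k ≤ n →
            0 ≤ ((y + v) + ∑ i ∈ Finset.range k, X (m + 1 + i) ω).1 ∧
            0 ≤ ((y + v) + ∑ i ∈ Finset.range k, X (m + 1 + i) ω).2} := by
          ext ω
          simp only [Set.mem_preimage, hEdef, Set.mem_setOf_eq]
          constructor
          · rintro ⟨-, h⟩
            intro k hk1 hkn
            have := h k hk1 hkn
            rwa [hdsum k hkn ω] at this
          · intro h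
            refine ⟨hin, fun k hk1 hkn => ?_⟩
            rw [hdsum k hkn ω]
            exact h k hk1 hkn
        rw [hE]
        have := ih (m + 1) (y + v)
        have e2 : ∀ (k : ℕ) (ω : Ω), ∑ i ∈ Finset.range k, X (m + 1 + i) ω
            = ∑ i ∈ Finset.range k, X (m + 1 + i) ω := fun _ _ => rfl
        rw [show indQ (y + v) = 1 from if_pos hin, one_mul]
        exact this
      · have hE : Z ⁻¹' (E v) = ∅ := by
          ext ω
          simp only [Set.mem_preimage, hEdef, Set.mem_setOf_eq, Set.mem_empty_iff_false,
            iff_false]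
          rintro ⟨h, -⟩
          exact hin h
        rw [hE, show indQ (y + v) = 0 from if_neg hin, zero_mul]
        simp
    -- decompose S
    have hUmeas : MeasurableSet ((X m) ⁻¹' ({sA, sB, sC} : Set (ℤ × ℤ))) :=
      (hXmeas m) (Set.to_countable _).measurableSet
    have hdecomp : P S = P (S ∩ (X m) ⁻¹' ({sA, sB, sC} : Set (ℤ × ℤ))) := by
      have h1 := measure_inter_add_diff (μ := P) S hUmeas
      have h2 : P (S \ (X m) ⁻¹' ({sA, sB, sC} : Set (ℤ × ℤ))) = 0 := by
        refine measure_mono_null ?_ hwU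
        intro ω hω
        exact hω.2
      rw [← h1, h2, add_zero]
    have hsplit : S ∩ (X m) ⁻¹' ({sA, sB, sC} : Set (ℤ × ℤ))
        = ((X m) ⁻¹' {sA} ∩ Z ⁻¹' (E sA)) ∪ ((X m) ⁻¹' {sB} ∩ Z ⁻¹' (E sB))
          ∪ ((X m) ⁻¹' {sC} ∩ Z ⁻¹' (E sC)) := by
      rw [← hkey sA, ← hkey sB, ← hkey sC]
      ext ω
      simp only [Set.mem_inter_iff, Set.mem_union, Set.mem_preimage, Set.mem_insert_iff,
        Set.mem_singleton_iff]
      tauto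
    have hABC : sA ≠ sB ∧ sA ≠ sC ∧ sB ≠ sC := by
      refine ⟨?_, ?_, ?_⟩ <;> simp [sA, sB, sC, Prod.ext_iff]
    have hmeas1 : ∀ v, MeasurableSet ((X m) ⁻¹' {v} ∩ Z ⁻¹' (E v)) := fun v =>
      ((hXmeas m) (measurableSet_singleton v)).inter (hZmeas (hEmeas v))
    have hd1 : Disjoint ((X m) ⁻¹' {sA} ∩ Z ⁻¹' (E sA)) ((X m) ⁻¹' {sB} ∩ Z ⁻¹' (E sB)) := by
      refine Set.disjoint_left.mpr ?_
      rintro ω ⟨h1, -⟩ ⟨h2, -⟩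
      rw [Set.mem_preimage, Set.mem_singleton_iff] at h1 h2
      exact hABC.1 (h1 ▸ h2 ▸ rfl)
    have hd2 : Disjoint (((X m) ⁻¹' {sA} ∩ Z ⁻¹' (E sA)) ∪ ((X m) ⁻¹' {sB} ∩ Z ⁻¹' (E sB)))
        ((X m) ⁻¹' {sC} ∩ Z ⁻¹' (E sC)) := by
      refine Set.disjoint_left.mpr ?_
      rintro ω (⟨h1, -⟩ | ⟨h1, -⟩) ⟨h2, -⟩ <;>
        rw [Set.mem_preimage, Set.mem_singleton_iff] at h1 h2
      · exact hABC.2.1 (h1 ▸ h2 ▸ rfl)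
      · exact hABC.2.2 (h1 ▸ h2 ▸ rfl)
    have hPS : P S = P ((X m) ⁻¹' {sA} ∩ Z ⁻¹' (E sA)) + P ((X m) ⁻¹' {sB} ∩ Z ⁻¹' (E sB))
        + P ((X m) ⁻¹' {sC} ∩ Z ⁻¹' (E sC)) := by
      rw [hdecomp, hsplit, measure_union hd2 (hmeas1 sC), measure_union hd1 (hmeas1 sB)]
    have hprod : ∀ v, P ((X m) ⁻¹' {v} ∩ Z ⁻¹' (E v)) = P ((X m) ⁻¹' {v}) * P (Z ⁻¹' (E v)) :=
      fun v => hindepZ.measure_inter_preimage_eq_mul _ _ (measurableSet_singleton v) (hEmeas v)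
    -- put everything together
    have hgnn : ∀ z, (0:ℝ) ≤ indQ z * g q n z := fun z =>
      mul_nonneg (indQ_nonneg z) (g_nonneg hq0 hq n z)
    have hp : (0:ℝ) ≤ 1 - 2*q := by linarith
    calc P S = ENNReal.ofReal q * ENNReal.ofReal (indQ (y + sA) * g q n (y + sA))
          + ENNReal.ofReal q * ENNReal.ofReal (indQ (y + sB) * g q n (y + sB))
          + ENNReal.ofReal (1 - 2*q) * ENNReal.ofReal (indQ (y + sC) * g q n (y + sC)) := by
          rw [hPS, hprod sA, hprod sB, hprod sC, hwA, hwB, hwC, hpiece sA, hpiece sB, hpiece sC]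
      _ = ENNReal.ofReal (g q (n+1) y) := by
          rw [← ENNReal.ofReal_mul hq0, ← ENNReal.ofReal_mul hq0, ← ENNReal.ofReal_mul hp,
            ← ENNReal.ofReal_add (mul_nonneg hq0 (hgnn _)) (mul_nonneg hq0 (hgnn _)),
            ← ENNReal.ofReal_add
              (add_nonneg (mul_nonneg hq0 (hgnn _)) (mul_nonneg hq0 (hgnn _)))
              (mul_nonneg hp (hgnn _))]
          simp only [g]
    
end Prob

end QPWalk

namespace QPWalk

/-- convergence of `a ^ (1/n)` to `1` for `a > 0` -/
lemma tendsto_rpow_inv_one {a : ℝ} (ha : 0 < a) :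
    Filter.Tendsto (fun n : ℕ => a ^ ((n : ℝ)⁻¹)) Filter.atTop (nhds 1) := by
  have h1 : ∀ n : ℕ, a ^ ((n : ℝ)⁻¹) = Real.exp (Real.log a * (n : ℝ)⁻¹) := fun n =>
    Real.rpow_def_of_pos ha _
  simp only [h1]
  have h2 : Filter.Tendsto (fun n : ℕ => Real.log a * (n : ℝ)⁻¹) Filter.atTop (nhds 0) := by
    have := (tendsto_inv_atTop_nhds_zero_nat (𝕜 := ℝ)).const_mul (Real.log a)
    simpa using this
  have := (Real.continuous_exp.tendsto 0).comp h2
  simpa [Function.comp_def] using this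

/-- the real-valued limit statement -/
lemma g_tendsto {q : ℝ} (hq0 : 0 < q) (hq : q ≤ 1/2) {L : ℕ} (hL : 1 ≤ L)
    (x : ℤ × ℤ) (hx1 : 0 ≤ x.1) (hx2 : 0 ≤ x.2) (hxsum : x.1 + x.2 = L) :
    Filter.Tendsto (fun n : ℕ => (g q n x) ^ ((n : ℝ)⁻¹)) Filter.atTop (nhds (lam q L)) := by
  obtain ⟨C, hC0, hC⟩ := g_upper hq0 hq L
  set lm := lam q L with hlm
  have hlmpos : 0 < lm := lam_pos hq0 hL
  set c := w L x.1 with hc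
  have hcpos : 0 < c := w_pos L hx1 (by omega)
  have hClt : (0:ℝ) < C + 1 := by linarith
  have hlow : ∀ n, c * lm ^ n ≤ g q n x := by
    intro n
    have := g_lower hq0.le hq L n x hx1 hx2 hxsum
    linarith [this]
  have hup : ∀ n, g q n x ≤ (C + 1) * lm ^ n := by
    intro n
    have h1 := hC n x hx1 hx2 hxsum
    have h2 : (0:ℝ) ≤ lm ^ n := by positivity
    nlinarith
  have hpow : ∀ n : ℕ, 1 ≤ n → (lm ^ n : ℝ) ^ ((n : ℝ)⁻¹) = lm := by
    intro n hn
    have hn' : (n : ℝ) ≠ 0 := by positivity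
    rw [← Real.rpow_natCast lm n, ← Real.rpow_mul hlmpos.le, mul_inv_cancel₀ hn',
      Real.rpow_one]
  have hlow' : ∀ᶠ n : ℕ in Filter.atTop,
      c ^ ((n : ℝ)⁻¹) * lm ≤ (g q n x) ^ ((n : ℝ)⁻¹) := by
    filter_upwards [Filter.eventually_ge_atTop 1] with n hn
    have h1 : (c * lm ^ n) ^ ((n : ℝ)⁻¹) ≤ (g q n x) ^ ((n : ℝ)⁻¹) :=
      Real.rpow_le_rpow (by positivity) (hlow n) (by positivity)
    rwa [Real.mul_rpow hcpos.le (by positivity), hpow n hn] at h1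
  have hup' : ∀ᶠ n : ℕ in Filter.atTop,
      (g q n x) ^ ((n : ℝ)⁻¹) ≤ (C + 1) ^ ((n : ℝ)⁻¹) * lm := by
    filter_upwards [Filter.eventually_ge_atTop 1] with n hn
    have h0 : (0:ℝ) ≤ g q n x := g_nonneg hq0.le hq n x
    have h1 : (g q n x) ^ ((n : ℝ)⁻¹) ≤ ((C + 1) * lm ^ n) ^ ((n : ℝ)⁻¹) :=
      Real.rpow_le_rpow h0 (hup n) (by positivity)
    rwa [Real.mul_rpow hClt.le (by positivity), hpow n hn] at h1
  have hl : Filter.Tendsto (fun n : ℕ => c ^ ((n : ℝ)⁻¹) * lm) Filter.atTop (nhds lm) := by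
    have := (tendsto_rpow_inv_one hcpos).mul_const lm
    simpa using this
  have hu : Filter.Tendsto (fun n : ℕ => (C + 1) ^ ((n : ℝ)⁻¹) * lm) Filter.atTop (nhds lm) := by
    have := (tendsto_rpow_inv_one hClt).mul_const lm
    simpa using this
  exact tendsto_of_tendsto_of_tendsto_of_le_of_le' hl hu hlow' hup'

end QPWalk


end Aux

open QPWalk in
/-- **Half-space walks in the quarter plane**: for the random walk on `ℤ²` with steps
`(1,−1), (−1,1), (−1,−1)` of respective probabilities `q, q, p` (`p + 2q = 1`), started at a
point `x` of the diagonal segment `D_{2N} = {(i,j) ∈ Q : i + j = 2N}`, the probability of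
staying in the quarter plane `Q` up to time `n` decays at the exponential rate
`2q·cos(π/(2N+2))` (which depends on the starting point). -/
theorem exit_time_quarter_plane_halfspace_walk
    (q : ℝ) (hq0 : 0 < q) (hq : q ≤ 1 / 2)
    (μ : Measure (ℤ × ℤ))
    (hμ : μ = ENNReal.ofReal q • Measure.dirac (1, -1)
        + ENNReal.ofReal q • Measure.dirac (-1, 1)
        + ENNReal.ofReal (1 - 2 * q) • Measure.dirac (-1, -1))
    (Ω : Type) [MeasurableSpace Ω] (P : Measure Ω) [IsProbabilityMeasure P]
    (X : ℕ → Ω → ℤ × ℤ)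
    (hXmeas : ∀ n, Measurable (X n))
    (hXindep : iIndepFun X P)
    (hXlaw : ∀ n, Measure.map (X n) P = μ)
    (N : ℕ) (hN : 1 ≤ N)
    (x : ℤ × ℤ) (hx1 : 0 ≤ x.1) (hx2 : 0 ≤ x.2) (hxsum : x.1 + x.2 = 2 * N) :
    Tendsto (fun n : ℕ =>
        P {ω | ∀ k : ℕ, 1 ≤ k → k ≤ n →
            0 ≤ (x + ∑ i ∈ Finset.range k, X i ω).1 ∧
            0 ≤ (x + ∑ i ∈ Finset.range k, X i ω).2} ^ ((n : ℝ)⁻¹))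
      atTop
      (𝓝 (ENNReal.ofReal (2 * q * Real.cos (Real.pi / (2 * N + 2))))) := by
  subst hμ
  have hPn : ∀ n : ℕ, P {ω | ∀ k : ℕ, 1 ≤ k → k ≤ n →
      0 ≤ (x + ∑ i ∈ Finset.range k, X i ω).1 ∧
      0 ≤ (x + ∑ i ∈ Finset.range k, X i ω).2} = ENNReal.ofReal (g q n x) := by
    intro n
    have h := prob_eq hq0.le hq P X hXmeas hXindep hXlaw n 0 x
    have hset : {ω : Ω | ∀ k : ℕ, 1 ≤ k → k ≤ n →
        0 ≤ (x + ∑ i ∈ Finset.range k, X (0 + i) ω).1 ∧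
        0 ≤ (x + ∑ i ∈ Finset.range k, X (0 + i) ω).2}
        = {ω : Ω | ∀ k : ℕ, 1 ≤ k → k ≤ n →
        0 ≤ (x + ∑ i ∈ Finset.range k, X i ω).1 ∧
        0 ≤ (x + ∑ i ∈ Finset.range k, X i ω).2} := by
      simp only [Nat.zero_add]
    rwa [hset] at h
  have hL : 1 ≤ 2 * N := by omega
  have hxsum' : x.1 + x.2 = ((2 * N : ℕ) : ℤ) := by push_cast; omega
  have hreal := g_tendsto hq0 hq hL x hx1 hx2 hxsum'
  have hlim : lam q (2 * N) = 2 * q * Real.cos (Real.pi / (2 * (N:ℝ) + 2)) := by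
    unfold lam
    push_cast
    ring_nf
  have hgpos : ∀ n, 0 < g q n x := by
    intro n
    have h1 := g_lower hq0.le hq (2 * N) n x hx1 hx2 hxsum'
    have h2 : 0 < lam q (2 * N) ^ n * w (2 * N) x.1 := by
      have := lam_pos hq0 hL
      have := w_pos (2 * N) hx1 (by omega)
      positivity
    linarith
  have hconv : ∀ n : ℕ, ENNReal.ofReal (g q n x) ^ ((n : ℝ)⁻¹)
      = ENNReal.ofReal ((g q n x) ^ ((n : ℝ)⁻¹)) := fun n =>
    ENNReal.ofReal_rpow_of_pos (hgpos n)
  have : Filter.Tendsto (fun n : ℕ => ENNReal.ofReal ((g q n x) ^ ((n : ℝ)⁻¹)))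
      Filter.atTop (nhds (ENNReal.ofReal (lam q (2 * N)))) :=
    (ENNReal.continuous_ofReal.tendsto _).comp hreal
  rw [hlim] at this
  have hfinal := this.congr (fun n => by rw [← hconv n, ← hPn n])
  convert hfinal using 2
end

section
/- Let (S̃_n)_{n≥0} be the simple symmetric random walk on ℤ started at x (jumps +1 and −1 each with probability 1/2). Then for every N ≥ 0 and every x ∈ {0, 1, …, 2N}, lim_{n→∞} (P^x[S̃_1 ∈ {0,…,2N}, …, S̃_n ∈ {0,…,2N}])^{1/n} = cos(π/(2N+2)). -/
open MeasureTheory ProbabilityTheory Filter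
open scoped ENNReal Topology

/-! ### Combinatorial path counting -/

def swSg (b : Bool) : ℤ := if b then 1 else -1

def swExt {n : ℕ} (ε : Fin n → Bool) (i : ℕ) : ℤ :=
  if h : i < n then swSg (ε ⟨i, h⟩) else 0

def swOk (N : ℕ) (y : ℤ) {n : ℕ} (ε : Fin n → Bool) : Prop :=
  ∀ k < n + 1, 1 ≤ k →
    0 ≤ y + ∑ i ∈ Finset.range k, swExt ε i ∧ y + ∑ i ∈ Finset.range k, swExt ε i ≤ 2 * N

instance (N : ℕ) (y : ℤ) (n : ℕ) : DecidablePred (swOk N y (n := n)) := fun _ => by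
  unfold swOk; infer_instance

def swAdm (N n : ℕ) (y : ℤ) : Finset (Fin n → Bool) := Finset.univ.filter (swOk N y)

def swCnt (N : ℕ) : ℕ → ℤ → ℕ
  | 0, _ => 1
  | n+1, y =>
      (if 0 ≤ y + 1 ∧ y + 1 ≤ 2 * N then swCnt N n (y + 1) else 0)
        + (if 0 ≤ y - 1 ∧ y - 1 ≤ 2 * N then swCnt N n (y - 1) else 0)

lemma swExt_cons_zero {n : ℕ} (b : Bool) (ε : Fin n → Bool) :
    swExt (Fin.cons b ε) 0 = swSg b := by
  simp [swExt]

lemma swExt_cons_succ {n : ℕ} (b : Bool) (ε : Fin n → Bool) (i : ℕ) :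
    swExt (Fin.cons b ε) (i + 1) = swExt ε i := by
  unfold swExt
  by_cases h : i < n
  · rw [dif_pos (Nat.succ_lt_succ h), dif_pos h]
    exact congrArg swSg (Fin.cons_succ (α := fun _ => Bool) b ε ⟨i, h⟩)
  · rw [dif_neg (by omega), dif_neg h]

lemma swExt_cons_sum {n : ℕ} (b : Bool) (ε : Fin n → Bool) (k : ℕ) :
    ∑ i ∈ Finset.range (k + 1), swExt (Fin.cons b ε) i
      = swSg b + ∑ i ∈ Finset.range k, swExt ε i := by
  rw [Finset.sum_range_succ']
  simp only [swExt_cons_succ, swExt_cons_zero]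
  ring

lemma swOk_cons {N n : ℕ} {y : ℤ} {b : Bool} {ε : Fin n → Bool} :
    swOk N y (Fin.cons b ε) ↔
      (0 ≤ y + swSg b ∧ y + swSg b ≤ 2 * N) ∧ swOk N (y + swSg b) ε := by
  constructor
  · intro h
    refine ⟨?_, ?_⟩
    · have h1 := h 1 (by omega) (by omega)
      simpa [Finset.sum_range_one, swExt_cons_zero] using h1
    · intro k hk hk1
      have h2 := h (k + 1) (by omega) (by omega)
      rw [swExt_cons_sum, ← add_assoc] at h2
      exact h2
  · rintro ⟨h1, h2⟩ k hk hk1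
    rcases k with _ | k
    · omega
    rcases k with _ | k
    · simpa [Finset.sum_range_one, swExt_cons_zero] using h1
    · have h3 := h2 (k + 1) (by omega) (by omega)
      rw [swExt_cons_sum, ← add_assoc]
      exact h3

lemma swAdm_card (N : ℕ) : ∀ (n : ℕ) (y : ℤ), (swAdm N n y).card = swCnt N n y := by
  intro n
  induction n with
  | zero =>
    intro y
    have hall : ∀ ε ∈ (Finset.univ : Finset (Fin 0 → Bool)), swOk N y ε := by
      intro ε _ k hk hk1; omega
    rw [swAdm, Finset.filter_true_of_mem hall, Finset.card_univ]
    simp [swCnt]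
  | succ n ih =>
    intro y
    have hb : ∀ b : Bool,
        ((swAdm N (n+1) y).filter (fun ε => ε 0 = b)).card
          = if 0 ≤ y + swSg b ∧ y + swSg b ≤ 2 * N then swCnt N n (y + swSg b) else 0 := by
      intro b
      by_cases hc : 0 ≤ y + swSg b ∧ y + swSg b ≤ 2 * N
      · rw [if_pos hc, ← ih (y + swSg b)]
        refine Finset.card_bij' (fun ε _ => Fin.tail ε) (fun ε _ => Fin.cons b ε) ?_ ?_ ?_ ?_
        · intro ε hε
          simp only [Finset.mem_filter, swAdm, Finset.mem_univ, true_and] at hε ⊢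
          obtain ⟨hok, h0⟩ := hε
          have : ε = Fin.cons b (Fin.tail ε) := by
            rw [← h0]; exact (Fin.cons_self_tail ε).symm
          rw [this] at hok
          exact (swOk_cons.mp hok).2
        · intro ε hε
          simp only [Finset.mem_filter, swAdm, Finset.mem_univ, true_and] at hε ⊢
          exact ⟨swOk_cons.mpr ⟨hc, hε⟩, Fin.cons_zero _ _⟩
        · intro ε hε
          simp only [Finset.mem_filter] at hε
          show Fin.cons b (Fin.tail ε) = ε
          rw [← hε.2]
          exact Fin.cons_self_tail ε
        · intro ε _
          show Fin.tail (Fin.cons b ε : Fin (n+1) → Bool) = ε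
          funext j
          exact Fin.cons_succ (α := fun _ => Bool) b ε j
      · rw [if_neg hc]
        rw [Finset.card_eq_zero, Finset.eq_empty_iff_forall_notMem]
        intro ε hε
        simp only [Finset.mem_filter, swAdm, Finset.mem_univ, true_and] at hε
        obtain ⟨hok, h0⟩ := hε
        have : ε = Fin.cons b (Fin.tail ε) := by
          rw [← h0]; exact (Fin.cons_self_tail ε).symm
        rw [this] at hok
        exact hc (swOk_cons.mp hok).1
    have hsplit := Finset.card_filter_add_card_filter_not
      (s := swAdm N (n+1) y) (fun ε => ε 0 = true)
    have hneg : ((swAdm N (n+1) y).filter fun ε => ¬ (ε 0 = true)).card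
        = ((swAdm N (n+1) y).filter fun ε => ε 0 = false).card := by
      congr 1
      apply Finset.filter_congr
      intro ε _
      simp
    rw [hneg, hb true, hb false] at hsplit
    rw [← hsplit, swCnt]
    have ht : swSg true = 1 := rfl
    have hf : swSg false = -1 := rfl
    rw [ht, hf]
    norm_num [sub_eq_add_neg]

/-! ### The sine eigenvector -/

noncomputable def swF (N : ℕ) (y : ℤ) : ℝ :=
  if 0 ≤ y ∧ y ≤ 2 * N then Real.sin (Real.pi * ((y : ℝ) + 1) / (2 * N + 2)) else 0

lemma swDenom_pos (N : ℕ) : (0 : ℝ) < 2 * N + 2 := by positivity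

lemma swArg_mem {N : ℕ} {y : ℤ} (h0 : 0 ≤ y) (h2 : y ≤ 2 * N) :
    0 < Real.pi * ((y : ℝ) + 1) / (2 * N + 2) ∧
      Real.pi * ((y : ℝ) + 1) / (2 * N + 2) ≤ Real.pi - Real.pi / (2 * N + 2) := by
  have hy0 : (0 : ℝ) ≤ (y : ℝ) := by exact_mod_cast h0
  have hy2 : (y : ℝ) ≤ 2 * N := by exact_mod_cast h2
  have hD := swDenom_pos N
  constructor
  · positivity
  · rw [div_le_iff₀ hD] at *
    have : Real.pi - Real.pi / (2 * N + 2) = Real.pi * (2 * N + 1) / (2 * N + 2) := by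
      field_simp; ring
    rw [this, div_mul_cancel₀ _ (ne_of_gt hD)]
    nlinarith [Real.pi_pos]

lemma swF_nonneg (N : ℕ) (y : ℤ) : 0 ≤ swF N y := by
  unfold swF
  split_ifs with h
  · obtain ⟨h1, h2⟩ := swArg_mem h.1 h.2
    apply Real.sin_nonneg_of_nonneg_of_le_pi h1.le
    have : Real.pi / (2 * N + 2) ≥ 0 := by positivity
    linarith
  · exact le_refl _

lemma swF_le_one (N : ℕ) (y : ℤ) : swF N y ≤ 1 := by
  unfold swF
  split_ifs with h
  · exact Real.sin_le_one _
  · norm_num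

lemma swF_pos {N : ℕ} {y : ℤ} (h0 : 0 ≤ y) (h2 : y ≤ 2 * N) : 0 < swF N y := by
  obtain ⟨h1, h2'⟩ := swArg_mem h0 h2
  rw [swF, if_pos ⟨h0, h2⟩]
  apply Real.sin_pos_of_pos_of_lt_pi h1
  have : (0:ℝ) < Real.pi / (2 * N + 2) := by have := Real.pi_pos; positivity
  linarith

lemma sin_aux {t a : ℝ} (ht : 0 < t) (h1 : t ≤ a) (h2 : a ≤ Real.pi - t) :
    Real.sin t ≤ Real.sin a := by
  have hmono := Real.strictMonoOn_sin.monotoneOn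
  have hpi := Real.pi_pos
  rcases le_or_gt a (Real.pi / 2) with h | h
  · exact hmono ⟨by linarith, by linarith⟩ ⟨by linarith, h⟩ h1
  · rw [← Real.sin_pi_sub a]
    exact hmono ⟨by linarith, by linarith⟩ ⟨by linarith, by linarith⟩ (by linarith)

lemma sin_le_swF {N : ℕ} {y : ℤ} (h0 : 0 ≤ y) (h2 : y ≤ 2 * N) :
    Real.sin (Real.pi / (2 * N + 2)) ≤ swF N y := by
  have hD := swDenom_pos N
  have hpi := Real.pi_pos
  have ht : 0 < Real.pi / (2 * N + 2) := by positivity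
  obtain ⟨h1, h2'⟩ := swArg_mem h0 h2
  rw [swF, if_pos ⟨h0, h2⟩]
  apply sin_aux ht ?_ h2'
  rw [div_le_div_iff₀ hD hD]
  have hy0 : (0 : ℝ) ≤ (y : ℝ) := by exact_mod_cast h0
  nlinarith [mul_nonneg (mul_nonneg Real.pi_pos.le hy0) hD.le]

lemma swF_eigen {N : ℕ} {y : ℤ} (h0 : 0 ≤ y) (h2 : y ≤ 2 * N) :
    swF N (y + 1) + swF N (y - 1)
      = 2 * Real.cos (Real.pi / (2 * N + 2)) * swF N y := by
  have hD := (swDenom_pos N).ne'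
  have hup : swF N (y + 1) = Real.sin (Real.pi * ((y : ℝ) + 2) / (2 * N + 2)) := by
    by_cases hc : y + 1 ≤ 2 * N
    · rw [swF, if_pos ⟨by omega, hc⟩]
      congr 1
      push_cast
      ring
    · have hy : y = 2 * N := by omega
      rw [swF, if_neg (by omega)]
      subst hy
      have : Real.pi * ((((2 * N : ℤ)) : ℝ) + 2) / (2 * N + 2) = Real.pi := by
        push_cast
        field_simp
      rw [this, Real.sin_pi]
  have hdn : swF N (y - 1) = Real.sin (Real.pi * (y : ℝ) / (2 * N + 2)) := by
    by_cases hc : 1 ≤ y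
    · rw [swF, if_pos ⟨by omega, by omega⟩]
      congr 1
      push_cast
      ring
    · have hy : y = 0 := by omega
      rw [swF, if_neg (by omega)]
      subst hy
      norm_num
  rw [hup, hdn, swF, if_pos ⟨h0, h2⟩]
  have e1 : Real.pi * ((y : ℝ) + 2) / (2 * N + 2)
      = Real.pi * ((y : ℝ) + 1) / (2 * N + 2) + Real.pi / (2 * N + 2) := by
    field_simp; ring
  have e2 : Real.pi * (y : ℝ) / (2 * N + 2)
      = Real.pi * ((y : ℝ) + 1) / (2 * N + 2) - Real.pi / (2 * N + 2) := by
    field_simp; ring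
  rw [e1, e2, Real.sin_add, Real.sin_sub]
  ring

lemma swLam_nonneg (N : ℕ) : 0 ≤ Real.cos (Real.pi / (2 * N + 2)) := by
  have hpi := Real.pi_pos
  have hD := swDenom_pos N
  apply Real.cos_nonneg_of_mem_Icc
  constructor
  · have : 0 < Real.pi / (2 * N + 2) := by positivity
    linarith
  · rw [div_le_div_iff₀ hD two_pos]
    nlinarith

lemma swCnt_lower (N : ℕ) : ∀ (n : ℕ) (y : ℤ),
    swF N y * (2 * Real.cos (Real.pi / (2 * N + 2))) ^ n ≤ (swCnt N n y : ℝ) := by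
  intro n
  induction n with
  | zero => intro y; simpa [swCnt] using swF_le_one N y
  | succ n ih =>
    intro y
    have hlam := swLam_nonneg N
    have hpow : (0:ℝ) ≤ (2 * Real.cos (Real.pi / (2 * N + 2))) ^ n := by positivity
    by_cases hy : 0 ≤ y ∧ y ≤ 2 * N
    · have key : swF N y * (2 * Real.cos (Real.pi / (2 * N + 2))) ^ (n + 1)
          = swF N (y + 1) * (2 * Real.cos (Real.pi / (2 * N + 2))) ^ n
            + swF N (y - 1) * (2 * Real.cos (Real.pi / (2 * N + 2))) ^ n := by
        rw [← add_mul, swF_eigen hy.1 hy.2]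
        ring
      rw [key, swCnt]
      push_cast
      apply add_le_add
      · split_ifs with hc
        · exact ih (y + 1)
        · rw [swF, if_neg hc, zero_mul]
      · split_ifs with hc
        · exact ih (y - 1)
        · rw [swF, if_neg hc, zero_mul]
    · rw [swF, if_neg hy, zero_mul]
      positivity

lemma swCnt_upper (N : ℕ) : ∀ (n : ℕ) (y : ℤ), 0 ≤ y → y ≤ 2 * N →
    (swCnt N n y : ℝ) * Real.sin (Real.pi / (2 * N + 2))
      ≤ swF N y * (2 * Real.cos (Real.pi / (2 * N + 2))) ^ n := by
  intro n
  induction n with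
  | zero =>
    intro y h0 h2
    simpa [swCnt] using sin_le_swF h0 h2
  | succ n ih =>
    intro y h0 h2
    have hlam := swLam_nonneg N
    have hpow : (0:ℝ) ≤ (2 * Real.cos (Real.pi / (2 * N + 2))) ^ n := by positivity
    have key : swF N y * (2 * Real.cos (Real.pi / (2 * N + 2))) ^ (n + 1)
        = swF N (y + 1) * (2 * Real.cos (Real.pi / (2 * N + 2))) ^ n
          + swF N (y - 1) * (2 * Real.cos (Real.pi / (2 * N + 2))) ^ n := by
      rw [← add_mul, swF_eigen h0 h2]
      ring
    rw [key, swCnt]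
    push_cast
    rw [add_mul]
    apply add_le_add
    · split_ifs with hc
      · exact ih (y + 1) hc.1 hc.2
      · rw [zero_mul]
        exact mul_nonneg (swF_nonneg N _) hpow
    · split_ifs with hc
      · exact ih (y - 1) hc.1 hc.2
      · rw [zero_mul]
        exact mul_nonneg (swF_nonneg N _) hpow

/-! ### From probability to path counting -/

lemma swSg_inj : ∀ b b' : Bool, swSg b = swSg b' → b = b' := by decide

lemma swExt_mem {m : ℕ} (ε : Fin m → Bool) (i : ℕ) (h : i < m) :
    swExt ε i = 1 ∨ swExt ε i = -1 := by
  rw [swExt, dif_pos h]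
  cases ε ⟨i, h⟩ <;> simp [swSg]

lemma swProb {Ω : Type} [MeasurableSpace Ω] (P : Measure Ω) [IsProbabilityMeasure P]
    (μ : Measure ℤ)
    (hμ : μ = (2 : ℝ≥0∞)⁻¹ • Measure.dirac 1 + (2 : ℝ≥0∞)⁻¹ • Measure.dirac (-1))
    (X : ℕ → Ω → ℤ) (hXmeas : ∀ n, Measurable (X n))
    (hXindep : iIndepFun X P)
    (hXlaw : ∀ n, Measure.map (X n) P = μ) (N : ℕ) (x : ℤ) (n : ℕ) :
    P {ω | ∀ k : ℕ, 1 ≤ k → k ≤ n →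
        (x + ∑ i ∈ Finset.range k, X i ω) ∈ Set.Icc (0 : ℤ) (2 * N)}
      = (swCnt N n x : ℝ≥0∞) * 2⁻¹ ^ n := by
  have hsingle : ∀ (i : ℕ) (c : ℤ), c = 1 ∨ c = -1 → P (X i ⁻¹' {c}) = 2⁻¹ := by
    intro i c hc
    rw [← Measure.map_apply (hXmeas i) (measurableSet_singleton c), hXlaw i, hμ]
    rcases hc with rfl | rfl <;>
      simp [Measure.dirac_apply, Set.indicator_apply]
  set A : (Fin n → Bool) → Set Ω :=
    fun ε => ⋂ i ∈ Finset.range n, X i ⁻¹' {swExt ε i} with hA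
  have hAmeas : ∀ ε, MeasurableSet (A ε) := fun ε =>
    Finset.measurableSet_biInter _ (fun i _ => hXmeas i (measurableSet_singleton _))
  have hAmem : ∀ ε (ω : Ω), ω ∈ A ε ↔ ∀ i : ℕ, i < n → X i ω = swExt ε i := by
    intro ε ω
    simp [hA, Set.mem_iInter, Finset.mem_range]
  have hAval : ∀ ε, P (A ε) = 2⁻¹ ^ n := by
    intro ε
    rw [hA]
    rw [hXindep.measure_inter_preimage_eq_mul (Finset.range n)
      (fun i _ => measurableSet_singleton _)]
    rw [Finset.prod_congr rfl
      (fun i hi => hsingle i _ (swExt_mem ε i (Finset.mem_range.mp hi)))]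
    rw [Finset.prod_const, Finset.card_range]
  set G : Set Ω := ⋂ i ∈ Finset.range n, X i ⁻¹' ({1, -1} : Set ℤ) with hG
  have hGmem : ∀ ω : Ω, ω ∈ G ↔ ∀ i : ℕ, i < n → X i ω = 1 ∨ X i ω = -1 := by
    intro ω
    simp [hG, Set.mem_iInter, Finset.mem_range]
  have hGnull : P Gᶜ = 0 := by
    rw [hG, Set.compl_iInter₂]
    apply le_antisymm _ zero_le
    refine le_trans (measure_biUnion_finset_le _ _) ?_
    rw [Finset.sum_eq_zero]
    intro i _
    rw [← Set.preimage_compl,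
      ← Measure.map_apply (hXmeas i)
        (((measurableSet_singleton (-1 : ℤ)).insert 1).compl), hXlaw i, hμ]
    simp [Measure.dirac_apply, Set.indicator_apply]
  set E : Set Ω := {ω | ∀ k : ℕ, 1 ≤ k → k ≤ n →
      (x + ∑ i ∈ Finset.range k, X i ω) ∈ Set.Icc (0 : ℤ) (2 * N)} with hE
  have hEG : E ∩ G = ⋃ ε ∈ swAdm N n x, A ε := by
    ext ω
    simp only [Set.mem_inter_iff, Set.mem_iUnion, hE, Set.mem_setOf_eq]
    constructor
    · rintro ⟨hEω, hGω⟩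
      rw [hGmem] at hGω
      set ε : Fin n → Bool := fun i => decide (X (i : ℕ) ω = 1) with hεdef
      have hXε : ∀ i : ℕ, i < n → X i ω = swExt ε i := by
        intro i h
        rw [swExt, dif_pos h]
        rcases hGω i h with h1 | h1 <;> simp [hεdef, swSg, h1]
      have hsum : ∀ k : ℕ, k ≤ n →
          ∑ i ∈ Finset.range k, X i ω = ∑ i ∈ Finset.range k, swExt ε i :=
        fun k hk => Finset.sum_congr rfl
          (fun i hi => hXε i (lt_of_lt_of_le (Finset.mem_range.mp hi) hk))
      refine ⟨ε, ?_, ?_⟩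
      · simp only [swAdm, Finset.mem_filter, Finset.mem_univ, true_and]
        intro k hk hk1
        have h := hEω k hk1 (by omega)
        rw [Set.mem_Icc] at h
        rw [← hsum k (by omega)]
        exact h
      · exact (hAmem ε ω).mpr hXε
    · rintro ⟨ε, hεadm, hεA⟩
      have hXε := (hAmem ε ω).mp hεA
      constructor
      · intro k hk1 hkn
        simp only [swAdm, Finset.mem_filter, Finset.mem_univ, true_and] at hεadm
        have h := hεadm k (by omega) hk1
        rw [Set.mem_Icc]
        have hs : ∑ i ∈ Finset.range k, X i ω = ∑ i ∈ Finset.range k, swExt ε i :=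
          Finset.sum_congr rfl fun i hi =>
            hXε i (lt_of_lt_of_le (Finset.mem_range.mp hi) hkn)
        rw [hs]
        exact h
      · rw [hGmem]
        intro i hi
        rw [hXε i hi]
        exact swExt_mem ε i hi
  have hdisj : (↑(swAdm N n x) : Set (Fin n → Bool)).PairwiseDisjoint A := by
    intro ε _ ε' _ hne
    obtain ⟨i, hi⟩ := Function.ne_iff.mp hne
    refine Set.disjoint_left.mpr ?_
    intro ω hω hω'
    have h1 := (hAmem ε ω).mp hω i.1 i.2
    have h2 := (hAmem ε' ω).mp hω' i.1 i.2
    have h3 : swExt ε i.1 = swExt ε' i.1 := by rw [← h1, h2]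
    rw [swExt, dif_pos i.2, swExt, dif_pos i.2] at h3
    exact hi (swSg_inj _ _ h3)
  have hEeq : P E = P (⋃ ε ∈ swAdm N n x, A ε) := by
    apply le_antisymm
    · calc P E ≤ P ((E ∩ G) ∪ Gᶜ) := by
            apply measure_mono
            intro ω hω
            by_cases hg : ω ∈ G
            · exact Or.inl ⟨hω, hg⟩
            · exact Or.inr hg
        _ ≤ P (E ∩ G) + P Gᶜ := measure_union_le _ _
        _ = P (E ∩ G) := by rw [hGnull, add_zero]
        _ = P (⋃ ε ∈ swAdm N n x, A ε) := by rw [hEG]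
    · rw [← hEG]
      exact measure_mono Set.inter_subset_left
  rw [hEeq, measure_biUnion_finset hdisj (fun ε _ => hAmeas ε)]
  rw [Finset.sum_congr rfl (fun ε _ => hAval ε), Finset.sum_const, swAdm_card,
    nsmul_eq_mul]

/-! ### Limit computation -/

lemma swTendsto_aux {c lam : ℝ} (hc : 0 < c) (hlam : 0 ≤ lam) :
    Tendsto (fun n : ℕ => (c * lam ^ n) ^ ((n : ℝ)⁻¹)) atTop (𝓝 lam) := by
  have h1 : Tendsto (fun n : ℕ => c ^ ((n : ℝ)⁻¹)) atTop (𝓝 1) := by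
    have hrw : ∀ y : ℝ, c ^ y = Real.exp (Real.log c * y) := fun y => by
      rw [Real.rpow_def_of_pos hc]
    simp only [hrw]
    have h0 : Tendsto (fun n : ℕ => Real.log c * (n : ℝ)⁻¹) atTop (𝓝 0) := by
      simpa using tendsto_inv_atTop_nhds_zero_nat.const_mul (Real.log c)
    have := (Real.continuous_exp.tendsto 0).comp h0
    simpa [Real.exp_zero, Function.comp_def] using this
  have h2 : Tendsto (fun n : ℕ => c ^ ((n : ℝ)⁻¹) * lam) atTop (𝓝 lam) := by
    simpa using h1.mul_const lam
  apply Tendsto.congr' ?_ h2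
  filter_upwards [eventually_ge_atTop 1] with n hn
  have hn0 : (n : ℝ) ≠ 0 := Nat.cast_ne_zero.mpr (by omega)
  rw [Real.mul_rpow hc.le (pow_nonneg hlam n), ← Real.rpow_natCast lam n,
    ← Real.rpow_mul hlam, mul_inv_cancel₀ hn0, Real.rpow_one]

/-- **Spitzer's lemma**: for the simple symmetric random walk on `ℤ` started at
`x ∈ {0, …, 2N}`, the probability of staying in `{0, …, 2N}` up to time `n` decays at the
exponential rate `cos(π/(2N+2))`. -/
theorem simple_walk_segment_decay_rate
    (μ : Measure ℤ)
    (hμ : μ = (2 : ℝ≥0∞)⁻¹ • Measure.dirac 1 + (2 : ℝ≥0∞)⁻¹ • Measure.dirac (-1))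
    (Ω : Type) [MeasurableSpace Ω] (P : Measure Ω) [IsProbabilityMeasure P]
    (X : ℕ → Ω → ℤ)
    (hXmeas : ∀ n, Measurable (X n))
    (hXindep : iIndepFun X P)
    (hXlaw : ∀ n, Measure.map (X n) P = μ)
    (N : ℕ) (x : ℤ) (hx0 : 0 ≤ x) (hx2N : x ≤ 2 * N) :
    Tendsto (fun n : ℕ =>
        P {ω | ∀ k : ℕ, 1 ≤ k → k ≤ n →
            (x + ∑ i ∈ Finset.range k, X i ω) ∈ Set.Icc (0 : ℤ) (2 * N)} ^ ((n : ℝ)⁻¹))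
      atTop
      (𝓝 (ENNReal.ofReal (Real.cos (Real.pi / (2 * N + 2))))) := by
  have hD := swDenom_pos N
  have hpi := Real.pi_pos
  set lam : ℝ := Real.cos (Real.pi / (2 * N + 2)) with hlamdef
  have hlam0 : 0 ≤ lam := swLam_nonneg N
  have hsin : 0 < Real.sin (Real.pi / (2 * N + 2)) := by
    apply Real.sin_pos_of_pos_of_lt_pi (by positivity)
    rw [div_lt_iff₀ hD]
    nlinarith
  have hc1 : 0 < swF N x := swF_pos hx0 hx2N
  have hc2 : 0 < swF N x / Real.sin (Real.pi / (2 * N + 2)) := div_pos hc1 hsin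
  set q : ℕ → ℝ := fun n => (swCnt N n x : ℝ) * (2⁻¹ : ℝ) ^ n with hqdef
  have hq0 : ∀ n, 0 ≤ q n := fun n => by positivity
  have epow : ∀ n : ℕ, (2 * lam) ^ n * (2⁻¹ : ℝ) ^ n = lam ^ n := by
    intro n
    rw [← mul_pow]
    congr 1
    ring
  have hL : ∀ n, swF N x * lam ^ n ≤ q n := by
    intro n
    have h := swCnt_lower N n x
    have h2 : (0:ℝ) ≤ (2⁻¹:ℝ) ^ n := by positivity
    calc swF N x * lam ^ n = swF N x * (2 * lam) ^ n * (2⁻¹:ℝ) ^ n := by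
          rw [mul_assoc, epow n]
      _ ≤ (swCnt N n x : ℝ) * (2⁻¹:ℝ) ^ n := mul_le_mul_of_nonneg_right h h2
  have hU : ∀ n, q n ≤ (swF N x / Real.sin (Real.pi / (2 * N + 2))) * lam ^ n := by
    intro n
    have h := swCnt_upper N n x hx0 hx2N
    have h2 : (0:ℝ) ≤ (2⁻¹:ℝ) ^ n := by positivity
    have h3 : (swCnt N n x : ℝ)
        ≤ swF N x * (2 * lam) ^ n / Real.sin (Real.pi / (2 * N + 2)) :=
      (le_div_iff₀ hsin).mpr h
    calc q n ≤ (swF N x * (2 * lam) ^ n / Real.sin (Real.pi / (2 * N + 2))) * (2⁻¹:ℝ) ^ n :=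
          mul_le_mul_of_nonneg_right h3 h2
      _ = (swF N x / Real.sin (Real.pi / (2 * N + 2))) * ((2 * lam) ^ n * (2⁻¹:ℝ) ^ n) := by
          ring
      _ = (swF N x / Real.sin (Real.pi / (2 * N + 2))) * lam ^ n := by rw [epow n]
  have hreal : Tendsto (fun n : ℕ => q n ^ ((n : ℝ)⁻¹)) atTop (𝓝 lam) := by
    apply tendsto_of_tendsto_of_tendsto_of_le_of_le (swTendsto_aux hc1 hlam0)
      (swTendsto_aux hc2 hlam0)
    · intro n
      exact Real.rpow_le_rpow (by positivity) (hL n) (inv_nonneg.mpr (Nat.cast_nonneg n))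
    · intro n
      exact Real.rpow_le_rpow (hq0 n) (hU n) (inv_nonneg.mpr (Nat.cast_nonneg n))
  have henn := ENNReal.tendsto_ofReal hreal
  apply henn.congr
  intro n
  rw [swProb P μ hμ X hXmeas hXindep hXlaw N x n]
  have hofq : ((swCnt N n x : ℝ≥0∞) * 2⁻¹ ^ n) = ENNReal.ofReal (q n) := by
    rw [hqdef]
    rw [ENNReal.ofReal_mul (by positivity), ENNReal.ofReal_natCast,
      ENNReal.ofReal_pow (by norm_num)]
    congr 2
    rw [ENNReal.ofReal_inv_of_pos (by norm_num : (0:ℝ) < 2)]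
    norm_num
  rw [hofq, ENNReal.ofReal_rpow_of_nonneg (hq0 n) (inv_nonneg.mpr (Nat.cast_nonneg n))]
end

section
/- Let K ⊆ ℝ^d be a closed convex cone with non-empty interior, and let Y be a random vector in ℝ^d with Gaussian distribution N(m,Γ) (mean m, covariance matrix Γ). If m ∈ K and the affine subspace m + (ker Γ)^⊥ is not contained in any linear hyperplane, then P[Y ∈ int(K)] > 0. -/
open MeasureTheory ProbabilityTheory
open scoped ENNReal RealInnerProductSpace
open scoped Pointwise

/-- The standard Gaussian measure on `ℝ^d` (product of `d` standard normal laws). -/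
noncomputable def stdGaussianPi (d : ℕ) : Measure (Fin d → ℝ) :=
  Measure.pi fun _ => gaussianReal 0 1

/-- The Gaussian distribution on `ℝ^d` with mean `m` and covariance matrix `Γ = B * Bᵀ`,
realized as the law of `m + B Z` where `Z` is a standard Gaussian vector. -/
noncomputable def gaussianE {d : ℕ} (m : EuclideanSpace ℝ (Fin d))
    (B : Matrix (Fin d) (Fin d) ℝ) : Measure (EuclideanSpace ℝ (Fin d)) :=
  Measure.map
    (fun z : Fin d → ℝ =>
      m + Matrix.toEuclideanLin B ((EuclideanSpace.equiv (Fin d) ℝ).symm z))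
    (stdGaussianPi d)

instance gaussianReal_isOpenPosMeasure (μ : ℝ) :
    Measure.IsOpenPosMeasure (gaussianReal μ 1) := by
  rw [gaussianReal_of_var_ne_zero μ one_ne_zero]
  constructor
  intro U hU hne h0
  rw [withDensity_apply_eq_zero (measurable_gaussianPDF μ 1)] at h0
  have he : {x | gaussianPDF μ 1 x ≠ 0} ∩ U = U := by
    ext x; simp [(gaussianPDF_pos μ one_ne_zero x).ne']
  rw [he] at h0
  exact hU.measure_ne_zero volume hne h0

lemma toEuclideanLin_mul {d : ℕ} (A C : Matrix (Fin d) (Fin d) ℝ) :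
    Matrix.toEuclideanLin (A * C) = (Matrix.toEuclideanLin A) ∘ₗ (Matrix.toEuclideanLin C) := by
  ext x
  simp [Matrix.toEuclideanLin_apply, Matrix.mulVec_mulVec]

/-- **Lemma (Gaussian measure of the cone)**: let `Y` be a Gaussian vector `N(m,Γ)` in `ℝ^d`
(with `Γ = B * Bᵀ`). If `m` belongs to the closed convex cone `K` (with non-empty interior)
and the affine subspace `m + (ker Γ)^⊥` is not contained in any linear hyperplane, then
`P[Y ∈ int K] > 0`. -/
theorem gaussian_charges_interior_of_cone
    {d : ℕ} (hd : 1 ≤ d)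
    (K : Set (EuclideanSpace ℝ (Fin d)))
    (hKclosed : IsClosed K) (hKconvex : Convex ℝ K)
    (hKcone : ∀ c : ℝ, 0 ≤ c → ∀ x ∈ K, c • x ∈ K)
    (hKint : (interior K).Nonempty)
    (m : EuclideanSpace ℝ (Fin d))
    (Γ B : Matrix (Fin d) (Fin d) ℝ) (hΓ : B * B.transpose = Γ)
    (hm : m ∈ K)
    (hker : ¬ ∃ u : EuclideanSpace ℝ (Fin d), u ≠ 0 ∧
      ∀ y ∈ (LinearMap.ker (Matrix.toEuclideanLin Γ))ᗮ, ⟪u, m + y⟫ = 0) :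
    0 < gaussianE m B (interior K) := by
  classical
  set T : EuclideanSpace ℝ (Fin d) →ₗ[ℝ] EuclideanSpace ℝ (Fin d) := Matrix.toEuclideanLin B with hT
  -- Identify (ker Γ)ᗮ with range T
  have hBt : B.transpose = B.conjTranspose := by
    ext i j; simp [Matrix.conjTranspose_apply]
  have hGT : Matrix.toEuclideanLin Γ = T ∘ₗ LinearMap.adjoint T := by
    rw [← hΓ, toEuclideanLin_mul, hBt, Matrix.toEuclideanLin_conjTranspose_eq_adjoint]
  have hker1 : LinearMap.ker (Matrix.toEuclideanLin Γ) = LinearMap.ker (LinearMap.adjoint T) := by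
    rw [hGT]
    ext x
    simp only [LinearMap.mem_ker, LinearMap.comp_apply]
    constructor
    · intro h
      have h2 : ⟪LinearMap.adjoint T x, LinearMap.adjoint T x⟫ = 0 := by
        rw [LinearMap.adjoint_inner_left, h, inner_zero_right]
      exact inner_self_eq_zero.mp h2
    · intro h; rw [h, map_zero]
  have hker2 : LinearMap.ker (LinearMap.adjoint T) = (LinearMap.range T)ᗮ := by
    ext x
    simp only [LinearMap.mem_ker, Submodule.mem_orthogonal]
    constructor
    · rintro h _ ⟨y, rfl⟩
      rw [real_inner_comm, ← LinearMap.adjoint_inner_left, h, inner_zero_left]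
    · intro h
      have h2 : ⟪LinearMap.adjoint T x, LinearMap.adjoint T x⟫ = 0 := by
        rw [LinearMap.adjoint_inner_left]
        rw [real_inner_comm]
        exact h _ ⟨_, rfl⟩
      exact inner_self_eq_zero.mp h2
  have hrange : (LinearMap.ker (Matrix.toEuclideanLin Γ))ᗮ = LinearMap.range T := by
    rw [hker1, hker2, Submodule.orthogonal_orthogonal]
  -- positive scaling preserves interior K
  have hsc : ∀ r : ℝ, 0 < r → ∀ x ∈ interior K, r • x ∈ interior K := by
    intro r hr x hx
    have hsub : r • interior K ⊆ K := by
      rintro _ ⟨y, hy, rfl⟩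
      exact hKcone r hr.le y (interior_subset hy)
    have hopen : IsOpen (r • interior K) := isOpen_interior.smul₀ hr.ne'
    exact interior_maximal hsub hopen ⟨x, hx, rfl⟩
  obtain ⟨x₀, hx₀⟩ := hKint
  -- Key step: the affine subspace m + range T meets the interior of K
  have hmeet : ∃ w : EuclideanSpace ℝ (Fin d), m + T w ∈ interior K := by
    by_contra hcon
    push_neg at hcon
    set t : Set (EuclideanSpace ℝ (Fin d)) := (fun v => m + v) '' (LinearMap.range T : Set (EuclideanSpace ℝ (Fin d))) with ht
    have htconv : Convex ℝ t := ((LinearMap.range T).convex).translate m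
    have hdisj : Disjoint (interior K) t := by
      rw [Set.disjoint_left]
      rintro x hx ⟨v, ⟨w, rfl⟩, rfl⟩
      exact hcon w hx
    obtain ⟨f, u, hf1, hf2⟩ :=
      geometric_hahn_banach_open (hKconvex.interior) isOpen_interior htconv hdisj
    have hmt : m ∈ t := ⟨0, Submodule.zero_mem _, by simp⟩
    -- f vanishes on range T
    have hfv : ∀ v ∈ LinearMap.range T, f v = 0 := by
      intro v hv
      by_contra hne
      have h1 : ∀ r : ℝ, u ≤ f m + r * f v := by
        intro r
        have hmem : m + r • v ∈ t := ⟨r • v, Submodule.smul_mem _ _ hv, rfl⟩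
        simpa using hf2 _ hmem
      have h2 := h1 ((u - f m - 1) / f v)
      rw [div_mul_cancel₀ _ hne] at h2
      linarith
    -- f ≤ 0 on interior K
    have hfle : ∀ x ∈ interior K, f x ≤ 0 := by
      intro x hx
      by_contra hpos
      push_neg at hpos
      have h1 : ∀ r : ℝ, 0 < r → r * f x < u := by
        intro r hr
        simpa using hf1 _ (hsc r hr x hx)
      have h2 := h1 ((|u| + 1) / f x) (by positivity)
      rw [div_mul_cancel₀ _ hpos.ne'] at h2
      have := le_abs_self u
      linarith
    -- u ≥ 0
    have hu0 : 0 ≤ u := by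
      by_contra h
      push_neg at h
      have h1 : f x₀ < u := hf1 x₀ hx₀
      have hfx : f x₀ < 0 := h1.trans h
      have hr : 0 < u / (2 * f x₀) := div_pos_of_neg_of_neg h (by linarith)
      have h2 := hf1 _ (hsc _ hr x₀ hx₀)
      rw [f.map_smul, smul_eq_mul] at h2
      have h3 : u / (2 * f x₀) * f x₀ = u / 2 := by
        rw [div_mul_eq_mul_div, mul_comm (2 : ℝ) (f x₀), ← div_div,
          mul_div_assoc, div_self hfx.ne, mul_one]
      rw [h3] at h2
      linarith
    -- f m ≤ 0
    have hfm_le : f m ≤ 0 := by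
      by_contra hpos
      push_neg at hpos
      set r : ℝ := max 0 ((2 * u - f x₀ + 2) / f m) with hr
      have hrm : r * f m ≥ 2 * u - f x₀ + 2 := by
        have : (2 * u - f x₀ + 2) / f m ≤ r := le_max_right _ _
        calc 2 * u - f x₀ + 2 = (2 * u - f x₀ + 2) / f m * f m := by
              field_simp
          _ ≤ r * f m := by gcongr
      have hmem : (1/2 : ℝ) • (r • m) + (1/2 : ℝ) • x₀ ∈ interior K := by
        apply hKconvex.combo_closure_interior_mem_interior
          (subset_closure (hKcone r (le_max_left _ _) m hm)) hx₀ (by norm_num) (by norm_num)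
          (by norm_num)
      have h2 := hf1 _ hmem
      rw [map_add, f.map_smul, f.map_smul, f.map_smul, smul_eq_mul, smul_eq_mul, smul_eq_mul] at h2
      linarith
    have hfm : f m = 0 := le_antisymm hfm_le (hu0.trans (hf2 m hmt))
    -- build the separating vector
    refine hker ⟨(InnerProductSpace.toDual ℝ (EuclideanSpace ℝ (Fin d))).symm f, ?_, ?_⟩
    · intro h0
      have : f x₀ = 0 := by
        have := InnerProductSpace.toDual_symm_apply (𝕜 := ℝ) (E := EuclideanSpace ℝ (Fin d)) (y := f) (x := x₀)
        rw [h0, inner_zero_left] at this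
        exact this.symm
      have h1 : f x₀ < u := hf1 x₀ hx₀
      have h2 : u ≤ f m := hf2 m hmt
      rw [hfm] at h2
      linarith
    · intro y hy
      rw [hrange] at hy
      rw [InnerProductSpace.toDual_symm_apply, map_add, hfm, hfv y hy, add_zero]
  obtain ⟨w, hw⟩ := hmeet
  -- measure-theoretic conclusion
  have hTc : Continuous T := T.continuous_of_finiteDimensional
  set φ : (Fin d → ℝ) → EuclideanSpace ℝ (Fin d) := fun z => m + T ((EuclideanSpace.equiv (Fin d) ℝ).symm z) with hφ
  have hφc : Continuous φ := by
    apply continuous_const.add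
    exact hTc.comp (EuclideanSpace.equiv (Fin d) ℝ).symm.continuous
  haveI : Measure.IsOpenPosMeasure (stdGaussianPi d) := by
    unfold stdGaussianPi
    infer_instance
  rw [gaussianE, Measure.map_apply hφc.measurable isOpen_interior.measurableSet]
  refine (isOpen_interior.preimage hφc).measure_pos _ ⟨EuclideanSpace.equiv (Fin d) ℝ w, ?_⟩
  show m + T ((EuclideanSpace.equiv (Fin d) ℝ).symm (EuclideanSpace.equiv (Fin d) ℝ w)) ∈ interior K
  rw [ContinuousLinearEquiv.symm_apply_apply]; exact hw
end

section
/- Let μ be a square-integrable probability measure on ℝ^d satisfying (H1) whose mean m belongs to the cone K. Then there exist an integer k ≥ 1 and δ ≥ 0 such that P_μ^0[τ_{K_{-δ}} > k and S_k ∈ int(K)] > 0. -/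
open MeasureTheory ProbabilityTheory Filter
open scoped ENNReal RealInnerProductSpace Topology
open scoped Pointwise

set_option maxHeartbeats 1000000

variable {d : ℕ}

-- support lemma
lemma ae_mem_ballPos {α : Type*} [MetricSpace α] [SecondCountableTopology α]
    [MeasurableSpace α] (μ : Measure α) :
    μ {x | ¬ ∀ ε : ℝ, 0 < ε → 0 < μ (Metric.ball x ε)} = 0 := by
  obtain ⟨B, hBc, _, hBb⟩ := TopologicalSpace.exists_countable_basis α
  have hsub : {x | ¬ ∀ ε : ℝ, 0 < ε → 0 < μ (Metric.ball x ε)} ⊆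
      ⋃₀ {b ∈ B | μ b = 0} := by
    intro x hx
    push_neg at hx
    obtain ⟨ε, hε, hball⟩ := hx
    rw [le_zero_iff] at hball
    obtain ⟨b, hbB, hxb, hbsub⟩ := hBb.exists_subset_of_mem_open
      (Metric.mem_ball_self hε) Metric.isOpen_ball
    exact ⟨b, ⟨hbB, le_antisymm (hball ▸ measure_mono hbsub) bot_le⟩, hxb⟩
  refine measure_mono_null hsub ?_
  refine (measure_sUnion_null_iff (hBc.mono (Set.sep_subset _ _))).2 ?_
  exact fun s hs => hs.2



-- scaling interior of a cone
lemma smul_mem_interior_cone {K : Set (EuclideanSpace ℝ (Fin d))}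
    (hKcone : ∀ c : ℝ, 0 ≤ c → ∀ x ∈ K, c • x ∈ K)
    {t : ℝ} (ht : 0 < t) {w : EuclideanSpace ℝ (Fin d)} (hw : w ∈ interior K) :
    t • w ∈ interior K := by
  have h1 : t • w ∈ t • interior K := Set.smul_mem_smul_set hw
  rw [← interior_smul₀ ht.ne'] at h1
  refine interior_mono ?_ h1
  rintro _ ⟨x, hx, rfl⟩
  exact hKcone t ht.le x hx

lemma exists_interior_convexHull
    {K : Set (EuclideanSpace ℝ (Fin d))}
    (hKconvex : Convex ℝ K)
    (hKcone : ∀ c : ℝ, 0 ≤ c → ∀ x ∈ K, c • x ∈ K)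
    (hKint : (interior K).Nonempty)
    {v : EuclideanSpace ℝ (Fin d)} (hv : v ∈ interior K)
    (μ : Measure (EuclideanSpace ℝ (Fin d))) [IsProbabilityMeasure μ]
    (hid : Integrable (fun y : EuclideanSpace ℝ (Fin d) => y) μ)
    (hH1 : ∀ u : EuclideanSpace ℝ (Fin d), u ≠ 0 → μ {y | ⟪u, y⟫ = 0} < 1)
    (hmK : (∫ y, y ∂μ) ∈ K)
    {T : Set (EuclideanSpace ℝ (Fin d))}
    (hT : ∀ y ∈ T, ∀ ε : ℝ, 0 < ε → 0 < μ (Metric.ball y ε))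
    (hTae : μ Tᶜ = 0) :
    ∃ p, p ∈ interior K ∧ p ∈ convexHull ℝ T := by
  by_contra hcon
  push_neg at hcon
  have hdisj : Disjoint (interior K) (convexHull ℝ T) :=
    Set.disjoint_left.2 fun p hp hp2 => hcon p hp hp2
  obtain ⟨f, u, hfu, huf⟩ := geometric_hahn_banach_open hKconvex.interior
    isOpen_interior (convex_convexHull ℝ T) hdisj
  -- f ≤ 0 on interior K
  have hIntK : ∀ w ∈ interior K, f w ≤ 0 := by
    intro w hw
    by_contra hpos
    push_neg at hpos
    have ht : (0:ℝ) < (|u| + 1) / f w := by positivity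
    have := hfu _ (smul_mem_interior_cone hKcone ht hw)
    rw [_root_.map_smul, smul_eq_mul, div_mul_cancel₀ _ hpos.ne'] at this
    have : u < u := lt_of_le_of_lt (le_abs_self u) (by linarith)
    exact lt_irrefl _ this
  -- u ≥ 0
  have hu0 : 0 ≤ u := by
    have htend : Filter.Tendsto (fun t : ℝ => f (t • v)) (nhdsWithin 0 (Set.Ioi 0)) (nhds 0) := by
      have : Filter.Tendsto (fun t : ℝ => t * f v) (nhdsWithin 0 (Set.Ioi 0)) (nhds (0 * f v)) :=
        (continuous_mul_right (f v)).continuousAt.tendsto.mono_left nhdsWithin_le_nhds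
      simpa [_root_.map_smul, smul_eq_mul] using this
    refine le_of_tendsto htend ?_
    filter_upwards [self_mem_nhdsWithin] with t ht
    exact (hfu _ (smul_mem_interior_cone hKcone ht hv)).le
  -- f ≤ 0 on K
  have hK : ∀ x ∈ K, f x ≤ 0 := by
    intro x hx
    have hseg : ∀ t : ℝ, t ∈ Set.Ioc (0:ℝ) 1 → f (x + t • (v - x)) ≤ 0 := by
      intro t ht
      exact hIntK _ (hKconvex.add_smul_mem_interior hx (by simpa using hv) ht)
    have htend : Filter.Tendsto (fun t : ℝ => f (x + t • (v - x)))
        (nhdsWithin 0 (Set.Ioi 0)) (nhds (f x)) := by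
      have hc : Continuous fun t : ℝ => f (x + t • (v - x)) := by
        continuity
      have h2 : Filter.Tendsto (fun t : ℝ => f (x + t • (v - x))) (nhds 0)
          (nhds (f (x + (0:ℝ) • (v - x)))) := hc.continuousAt.tendsto
      have h3 := h2.mono_left (nhdsWithin_le_nhds (s := Set.Ioi (0:ℝ)))
      simpa using h3
    refine le_of_tendsto htend ?_
    filter_upwards [Ioc_mem_nhdsGT_of_mem (by norm_num : (0:ℝ) ∈ Set.Ico (0:ℝ) 1)] with t ht
    exact hseg t ht
  -- a.e. u ≤ f y
  have hae : ∀ᵐ y ∂μ, u ≤ f y := by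
    have : ∀ᵐ y ∂μ, y ∈ T := by
      rw [MeasureTheory.ae_iff]
      exact hTae
    filter_upwards [this] with y hy
    exact huf y (subset_convexHull ℝ T hy)
  have hfint : Integrable (fun y => f y) μ := f.integrable_comp hid
  have hfm : ∫ y, f y ∂μ = f (∫ y, y ∂μ) := ContinuousLinearMap.integral_comp_comm f hid
  have hfmle : f (∫ y, y ∂μ) ≤ 0 := hK _ hmK
  have hgnn : 0 ≤ᵐ[μ] fun y => f y - u := by
    filter_upwards [hae] with y hy; simpa using sub_nonneg.2 hy
  have hgint : Integrable (fun y => f y - u) μ := hfint.sub (integrable_const u)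
  have hgzero : (fun y => f y - u) =ᵐ[μ] 0 := by
    refine (integral_eq_zero_iff_of_nonneg_ae hgnn hgint).1 ?_
    have h1 : ∫ y, (f y - u) ∂μ = (∫ y, f y ∂μ) - u := by
      rw [integral_sub hfint (integrable_const u), integral_const]
      simp
    have h2 : 0 ≤ ∫ y, (f y - u) ∂μ := integral_nonneg_of_ae hgnn
    have h3 : ∫ y, (f y - u) ∂μ ≤ 0 := by rw [h1, hfm]; linarith
    linarith
  have hfu0 : ∀ᵐ y ∂μ, f y = u := by
    filter_upwards [hgzero] with y hy
    have : f y - u = 0 := hy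
    linarith
  have hueq : u = 0 := by
    have h1 : ∫ y, f y ∂μ = u := by
      rw [integral_congr_ae (g := fun _ => u) (by filter_upwards [hfu0] with y hy; exact hy)]
      simp
    have := hfm ▸ h1
    linarith [hfmle, hu0, h1.symm.trans hfm]
  have hf0 : ∀ᵐ y ∂μ, f y = 0 := by simpa [hueq] using hfu0
  set w : EuclideanSpace ℝ (Fin d) := (InnerProductSpace.toDual ℝ _).symm f with hwdef
  have hfne : f ≠ 0 := by
    intro h
    obtain ⟨a, ha⟩ := hKint
    have := hfu a ha
    rw [h] at this
    simp at this
    linarith [hueq ▸ this]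
  have hwne : w ≠ 0 := by
    intro h
    apply hfne
    have : (InnerProductSpace.toDual ℝ (EuclideanSpace ℝ (Fin d))) w = f :=
      (InnerProductSpace.toDual ℝ _).apply_symm_apply f
    rw [h] at this
    rw [← this]
    simp
  have hset : {y : EuclideanSpace ℝ (Fin d) | ⟪w, y⟫ = 0} = {y | f y = 0} := by
    ext y
    simp only [Set.mem_setOf_eq, hwdef, InnerProductSpace.toDual_symm_apply]
  have hmeas : MeasurableSet {y : EuclideanSpace ℝ (Fin d) | f y = 0} :=
    measurableSet_eq_fun f.continuous.measurable measurable_const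
  have h1 : μ {y | f y = 0} = 1 := by
    have hc : μ {y | f y = 0}ᶜ = 0 := by
      rw [MeasureTheory.ae_iff] at hf0
      exact hf0
    have := measure_add_measure_compl (μ := μ) hmeas
    rw [hc, add_zero] at this
    simpa using this
  have := hH1 w hwne
  rw [hset, h1] at this
  exact lt_irrefl _ this



lemma sum_range_getD {E : Type*} [AddCommMonoid E] (l : List E) :
    ∑ j ∈ Finset.range l.length, l.getD j 0 = l.sum := by
  induction l with
  | nil => simp
  | cons a l ih =>
      rw [List.length_cons, Finset.sum_range_succ']
      simp only [List.getD_cons_succ, List.getD_cons_zero, ih, List.sum_cons]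
      exact add_comm _ _

lemma exists_steps_into_interior
    {K : Set (EuclideanSpace ℝ (Fin d))}
    (hKcone : ∀ c : ℝ, 0 ≤ c → ∀ x ∈ K, c • x ∈ K)
    {T : Set (EuclideanSpace ℝ (Fin d))}
    {p : EuclideanSpace ℝ (Fin d)} (hp1 : p ∈ interior K) (hp2 : p ∈ convexHull ℝ T) :
    ∃ (k : ℕ) (c : ℕ → EuclideanSpace ℝ (Fin d)), 1 ≤ k ∧ (∀ j < k, c j ∈ T) ∧
      (∑ j ∈ Finset.range k, c j) ∈ interior K := by
  rw [convexHull_eq] at hp2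
  obtain ⟨ι, t, wt, z, hw0, hw1, hz, hcm⟩ := hp2
  have hp : p = ∑ i ∈ t, wt i • z i := by
    rw [← hcm, Finset.centerMass_eq_of_sum_1 _ _ hw1]
  obtain ⟨ε, hε, hball⟩ := Metric.isOpen_iff.1 isOpen_interior p hp1
  set C : ℝ := ∑ i ∈ t, ‖z i‖ with hC
  obtain ⟨N, hN⟩ := exists_nat_gt (max (C / ε) (t.card : ℝ))
  have hNC : C / ε < (N : ℝ) := lt_of_le_of_lt (le_max_left _ _) hN
  have hNcard : (t.card : ℝ) < N := lt_of_le_of_lt (le_max_right _ _) hN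
  have hNpos : (0 : ℝ) < N := lt_of_le_of_lt (Nat.cast_nonneg _) hNcard
  set n : ι → ℕ := fun i => ⌊(N : ℝ) * wt i⌋₊ with hn
  set s0 : EuclideanSpace ℝ (Fin d) := ∑ i ∈ t, ((n i : ℝ)) • z i with hs0
  -- closeness
  have hfl : ∀ i ∈ t, (n i : ℝ) ≤ (N : ℝ) * wt i ∧ (N : ℝ) * wt i < (n i : ℝ) + 1 := by
    intro i hi
    constructor
    · exact Nat.floor_le (by have := hw0 i hi; positivity)
    · exact Nat.lt_floor_add_one _
  have hclose : ‖s0 - (N : ℝ) • p‖ ≤ C := by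
    have h1 : (N : ℝ) • p = ∑ i ∈ t, ((N : ℝ) * wt i) • z i := by
      rw [hp, Finset.smul_sum]
      exact Finset.sum_congr rfl fun i _ => smul_smul _ _ _
    rw [hs0, h1, ← Finset.sum_sub_distrib]
    refine le_trans (norm_sum_le _ _) ?_
    rw [hC]
    refine Finset.sum_le_sum fun i hi => ?_
    rw [← sub_smul, norm_smul]
    have hb := hfl i hi
    have habs : ‖(n i : ℝ) - (N : ℝ) * wt i‖ ≤ 1 := by
      rw [Real.norm_eq_abs, abs_le]
      constructor <;> linarith [hb.1, hb.2]
    calc ‖(n i : ℝ) - (N:ℝ) * wt i‖ * ‖z i‖ ≤ 1 * ‖z i‖ :=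
          mul_le_mul_of_nonneg_right habs (norm_nonneg _)
      _ = ‖z i‖ := one_mul _
  -- s0 in interior K
  have hs0K : s0 ∈ interior K := by
    have h2 : ((N : ℝ)⁻¹) • s0 ∈ Metric.ball p ε := by
      rw [Metric.mem_ball, dist_eq_norm]
      have : (N : ℝ)⁻¹ • s0 - p = (N : ℝ)⁻¹ • (s0 - (N : ℝ) • p) := by
        rw [smul_sub, smul_smul, inv_mul_cancel₀ hNpos.ne', one_smul]
      rw [this, norm_smul, Real.norm_eq_abs, abs_of_pos (inv_pos.2 hNpos)]
      have hCN : C < (N : ℝ) * ε := (div_lt_iff₀ hε).1 hNC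
      calc (N:ℝ)⁻¹ * ‖s0 - (N:ℝ) • p‖ ≤ (N:ℝ)⁻¹ * C :=
            mul_le_mul_of_nonneg_left hclose (inv_pos.2 hNpos).le
        _ < (N:ℝ)⁻¹ * ((N:ℝ) * ε) := by
            exact mul_lt_mul_of_pos_left hCN (inv_pos.2 hNpos)
        _ = ε := by field_simp
    have h3 : (N : ℝ) • ((N : ℝ)⁻¹ • s0) ∈ interior K :=
      smul_mem_interior_cone hKcone hNpos (hball h2)
    rwa [smul_smul, mul_inv_cancel₀ hNpos.ne', one_smul] at h3
  -- total count positive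
  have hk1 : 1 ≤ ∑ i ∈ t, n i := by
    by_contra hcon
    push_neg at hcon
    have hzero : ∑ i ∈ t, n i = 0 := Nat.lt_one_iff.1 hcon
    have : (N : ℝ) < t.card := by
      have h4 : (N : ℝ) = ∑ i ∈ t, (N : ℝ) * wt i := by
        rw [← Finset.mul_sum, hw1, mul_one]
      have h5 : ∑ i ∈ t, ((N:ℝ) * wt i) < ∑ i ∈ t, ((n i : ℝ) + 1) := by
        refine Finset.sum_lt_sum_of_nonempty ?_ fun i hi => (hfl i hi).2
        by_contra hemp
        rw [Finset.not_nonempty_iff_eq_empty] at hemp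
        rw [hemp] at hw1
        simp at hw1
      have h6 : ∑ i ∈ t, ((n i : ℝ) + 1) = (∑ i ∈ t, (n i : ℝ)) + t.card := by
        rw [Finset.sum_add_distrib]
        simp
      have h7 : ∑ i ∈ t, (n i : ℝ) = 0 := by
        rw [← Nat.cast_sum, hzero, Nat.cast_zero]
      rw [h4]
      rw [h6, h7, zero_add] at h5
      exact h5
    linarith
  -- build the list
  set L : List (EuclideanSpace ℝ (Fin d)) :=
    t.toList.flatMap (fun i => List.replicate (n i) (z i)) with hL
  have hlen : L.length = ∑ i ∈ t, n i := by
    rw [hL, List.length_flatMap]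
    have : (t.toList.map (List.length ∘ fun i => List.replicate (n i) (z i))).sum
        = ∑ i ∈ t, n i := by
      rw [show (List.length ∘ fun i => List.replicate (n i) (z i)) = n by
        funext i; simp]
      exact Finset.sum_map_toList t n ▸ rfl
    simpa using this
  have hsumL : L.sum = s0 := by
    rw [hL, hs0, List.flatMap, List.sum_flatten, List.map_map]
    have h8 : (List.sum ∘ fun i => List.replicate (n i) (z i)) = fun i => (n i) • z i := by
      funext i; simp [List.sum_replicate]
    rw [h8]
    rw [Finset.sum_map_toList t (fun i => (n i) • z i)]
    exact Finset.sum_congr rfl fun i _ => (Nat.cast_smul_eq_nsmul ℝ _ _).symm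
  have hmemT : ∀ a ∈ L, a ∈ T := by
    intro a ha
    rw [hL, List.mem_flatMap] at ha
    obtain ⟨i, hi, hrep⟩ := ha
    rw [List.eq_of_mem_replicate hrep]
    exact hz i (Finset.mem_toList.1 hi)
  refine ⟨L.length, fun j => L.getD j 0, ?_, ?_, ?_⟩
  · rw [hlen]; exact hk1
  · intro j hj
    refine hmemT _ ?_
    show L.getD j 0 ∈ L
    rw [List.getD_eq_getElem _ _ hj]
    exact List.getElem_mem hj
  · rw [sum_range_getD, hsumL]
    exact hs0K



/-- **Lemma (pushing the walk into the cone)**: if `μ` is square-integrable, satisfies (H1)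
and its mean `m = ∫ y dμ(y)` lies in the closed convex cone `K` (with non-empty interior),
then there exist `k ≥ 1` and `δ ≥ 0` such that the walk started at `0` stays in
`K_{-δ} = K - δv` up to time `k` and lies in the interior of `K` at time `k` with positive
probability. -/
theorem walk_reaches_interior_with_positive_probability
    {d : ℕ} (hd : 1 ≤ d)
    (K : Set (EuclideanSpace ℝ (Fin d)))
    (hKclosed : IsClosed K) (hKconvex : Convex ℝ K)
    (hKcone : ∀ c : ℝ, 0 ≤ c → ∀ x ∈ K, c • x ∈ K)
    (hKint : (interior K).Nonempty)
    (v : EuclideanSpace ℝ (Fin d)) (hv : v ∈ interior K)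
    (μ : Measure (EuclideanSpace ℝ (Fin d))) [IsProbabilityMeasure μ]
    -- square integrability
    (hsq : Integrable (fun y : EuclideanSpace ℝ (Fin d) => ‖y‖ ^ 2) μ)
    -- (H1)
    (hH1 : ∀ u : EuclideanSpace ℝ (Fin d), u ≠ 0 → μ {y | ⟪u, y⟫ = 0} < 1)
    -- the drift belongs to K
    (hmK : (∫ y, y ∂μ) ∈ K)
    -- the random walk
    (Ω : Type) [MeasurableSpace Ω] (P : Measure Ω) [IsProbabilityMeasure P]
    (X : ℕ → Ω → EuclideanSpace ℝ (Fin d))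
    (hXmeas : ∀ n, Measurable (X n))
    (hXindep : iIndepFun X P)
    (hXlaw : ∀ n, Measure.map (X n) P = μ) :
    ∃ k : ℕ, 1 ≤ k ∧ ∃ δ : ℝ, 0 ≤ δ ∧
      0 < P {ω | (∀ j : ℕ, 1 ≤ j → j ≤ k →
            (∑ i ∈ Finset.range j, X i ω) ∈ (· + (-δ) • v) '' K) ∧
          (∑ i ∈ Finset.range k, X i ω) ∈ interior K} := by
  classical
  -- the set of points all of whose balls have positive measure
  set T : Set (EuclideanSpace ℝ (Fin d)) :=
    {y | ∀ ε : ℝ, 0 < ε → 0 < μ (Metric.ball y ε)} with hTdef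
  have hTae : μ Tᶜ = 0 := by
    have := ae_mem_ballPos μ
    simpa [hTdef, Set.compl_setOf] using this
  -- integrability of the identity
  have hid : Integrable (fun y : EuclideanSpace ℝ (Fin d) => y) μ := by
    have hg : Integrable (fun y : EuclideanSpace ℝ (Fin d) => 1 + ‖y‖ ^ 2) μ :=
      (integrable_const 1).add hsq
    refine hg.mono continuous_id.aestronglyMeasurable (ae_of_all _ fun y => ?_)
    have h1 : ‖(y : EuclideanSpace ℝ (Fin d))‖ ≤ 1 + ‖y‖ ^ 2 := by
      rcases le_or_gt ‖y‖ 1 with h | h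
      · nlinarith [sq_nonneg ‖y‖]
      · nlinarith
    have h2 : (0:ℝ) ≤ 1 + ‖y‖ ^ 2 := by positivity
    simpa [Real.norm_eq_abs, abs_of_nonneg h2] using h1
  obtain ⟨p, hp1, hp2⟩ := exists_interior_convexHull hKconvex hKcone hKint hv μ hid hH1 hmK
    (fun y hy => hy) hTae
  obtain ⟨k, c, hk1, hcT, hcsum⟩ := exists_steps_into_interior hKcone hp1 hp2
  -- radius around the target sum
  obtain ⟨ε2, hε2, hball2⟩ := Metric.isOpen_iff.1 isOpen_interior _ hcsum
  set ε' : ℝ := ε2 / (k + 1) with hε'def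
  have hε' : 0 < ε' := by positivity
  -- radius around v
  obtain ⟨r, hr, hrball⟩ := Metric.mem_nhds_iff.1 (mem_interior_iff_mem_nhds.1 hv)
  set B : ℝ := ∑ j ∈ Finset.range k, (‖c j‖ + ε') with hBdef
  have hB0 : 0 ≤ B := Finset.sum_nonneg fun j _ => by positivity
  set δ : ℝ := (B + 1) / r with hδdef
  have hδ : 0 < δ := by positivity
  refine ⟨k, hk1, δ, hδ.le, ?_⟩
  -- the event
  set Ev : Set Ω := ⋂ j ∈ Finset.range k, (X j) ⁻¹' (Metric.ball (c j) ε') with hEv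
  have hPEv : 0 < P Ev := by
    rw [hEv, hXindep.meas_biInter (fun i _ => ⟨Metric.ball (c i) ε', measurableSet_ball, rfl⟩)]
    refine CanonicallyOrderedAdd.prod_pos.2 fun j hj => ?_
    have : P ((X j) ⁻¹' (Metric.ball (c j) ε')) = μ (Metric.ball (c j) ε') := by
      rw [← hXlaw j, Measure.map_apply (hXmeas j) measurableSet_ball]
    rw [this]
    exact hcT j (Finset.mem_range.1 hj) ε' hε'
  refine lt_of_lt_of_le hPEv (measure_mono ?_)
  intro ω hω
  simp only [hEv, Set.mem_iInter, Set.mem_preimage] at hω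
  have hXb : ∀ j, j < k → ‖X j ω‖ ≤ ‖c j‖ + ε' := by
    intro j hj
    have := hω j (Finset.mem_range.2 hj)
    rw [Metric.mem_ball, dist_eq_norm] at this
    have hxy : c j + (X j ω - c j) = X j ω := by abel
    calc ‖X j ω‖ = ‖c j + (X j ω - c j)‖ := by rw [hxy]
      _ ≤ ‖c j‖ + ‖X j ω - c j‖ := norm_add_le _ _
      _ ≤ ‖c j‖ + ε' := by linarith
  constructor
  · intro j hj1 hjk
    set S : EuclideanSpace ℝ (Fin d) := ∑ i ∈ Finset.range j, X i ω with hS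
    have hnorm : ‖S‖ ≤ B := by
      calc ‖S‖ ≤ ∑ i ∈ Finset.range j, ‖X i ω‖ := norm_sum_le _ _
        _ ≤ ∑ i ∈ Finset.range j, (‖c i‖ + ε') := by
            refine Finset.sum_le_sum fun i hi => hXb i ?_
            exact lt_of_lt_of_le (Finset.mem_range.1 hi) hjk
        _ ≤ B := by
            refine Finset.sum_le_sum_of_subset_of_nonneg
              (Finset.range_subset_range.2 hjk) fun i _ _ => by positivity
    refine ⟨S + δ • v, ?_, ?_⟩
    · -- S + δ • v ∈ K
      have hmem : δ⁻¹ • (S + δ • v) ∈ Metric.ball v r := by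
        rw [Metric.mem_ball, dist_eq_norm]
        have heq : δ⁻¹ • (S + δ • v) - v = δ⁻¹ • S := by
          rw [smul_add, smul_smul, inv_mul_cancel₀ hδ.ne', one_smul]
          abel
        rw [heq, norm_smul, Real.norm_eq_abs, abs_of_pos (inv_pos.2 hδ)]
        have hBr : B < δ * r := by
          rw [hδdef, div_mul_cancel₀ _ hr.ne']
          linarith
        calc δ⁻¹ * ‖S‖ ≤ δ⁻¹ * B := mul_le_mul_of_nonneg_left hnorm (inv_pos.2 hδ).le
          _ < δ⁻¹ * (δ * r) := mul_lt_mul_of_pos_left hBr (inv_pos.2 hδ)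
          _ = r := by field_simp
      have := hKcone δ hδ.le _ (hrball hmem)
      rwa [smul_smul, mul_inv_cancel₀ hδ.ne', one_smul] at this
    · show (S + δ • v) + (-δ) • v = S
      rw [neg_smul]
      abel
  · -- final point in interior K
    have hdist : ‖(∑ i ∈ Finset.range k, X i ω) - ∑ j ∈ Finset.range k, c j‖ < ε2 := by
      rw [← Finset.sum_sub_distrib]
      calc ‖∑ i ∈ Finset.range k, (X i ω - c i)‖
          ≤ ∑ i ∈ Finset.range k, ‖X i ω - c i‖ := norm_sum_le _ _
        _ ≤ ∑ i ∈ Finset.range k, ε' := by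
            refine Finset.sum_le_sum fun i hi => ?_
            have := hω i hi
            rw [Metric.mem_ball, dist_eq_norm] at this
            exact this.le
        _ = k * ε' := by rw [Finset.sum_const, Finset.card_range]; ring
        _ < ε2 := by
            rw [hε'def]
            have hklt : (k : ℝ) < (k:ℝ) + 1 := by linarith
            have h9 : (((k:ℝ)) + 1) * (ε2 / (((k:ℝ)) + 1)) = ε2 := by field_simp
            calc (k:ℝ) * (ε2 / (((k:ℝ)) + 1)) < (((k:ℝ)) + 1) * (ε2 / (((k:ℝ)) + 1)) :=
                  mul_lt_mul_of_pos_right hklt (by positivity)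
              _ = ε2 := h9
    exact hball2 (by rw [Metric.mem_ball, dist_eq_norm]; exact hdist)
end

section
/- Let μ be a probability measure on ℝ^d and suppose that for some integer k ≥ 1, some δ ≥ 0 and some ε > 0 one has P_μ^0[τ_{K_{-δ}} > k and S_k ∈ K_ε] = γ > 0. Then for every integer ℓ ≥ 1 and every x ∈ K_δ, P_μ^x[τ_K > ℓk and S_{ℓk} − x ∈ K_{ℓε}] ≥ γ^ℓ. -/
open MeasureTheory ProbabilityTheory Filter
open scoped ENNReal RealInnerProductSpace Topology

lemma aux_map_tuple_pi {d : ℕ} {Ω : Type} [MeasurableSpace Ω] (P : Measure Ω)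
    (μ : Measure (EuclideanSpace ℝ (Fin d))) [IsProbabilityMeasure μ]
    (X : ℕ → Ω → EuclideanSpace ℝ (Fin d))
    (hXmeas : ∀ n, Measurable (X n))
    (hXindep : iIndepFun X P)
    (hXlaw : ∀ n, Measure.map (X n) P = μ)
    {k : ℕ} (c : Fin k → ℕ) (hc : Function.Injective c) :
    P.map (fun ω i => X (c i) ω) = Measure.pi (fun _ => μ) := by
  classical
  symm
  refine Measure.pi_eq fun s hs => ?_
  set sets : ℕ → Set (EuclideanSpace ℝ (Fin d)) :=
    fun n => if h : ∃ i, c i = n then s h.choose else Set.univ with hsets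
  have hsets_c : ∀ i, sets (c i) = s i := by
    intro i
    have h : ∃ j, c j = c i := ⟨i, rfl⟩
    simp only [hsets, dif_pos h]
    rw [hc h.choose_spec]
  have hsets_meas : ∀ n, MeasurableSet (sets n) := by
    intro n
    simp only [hsets]
    split
    · exact hs _
    · exact MeasurableSet.univ
  have hmeas_tuple : Measurable (fun ω (i : Fin k) => X (c i) ω) :=
    measurable_pi_lambda _ fun i => hXmeas (c i)
  rw [Measure.map_apply hmeas_tuple (MeasurableSet.univ_pi hs)]
  have hpre : (fun ω (i : Fin k) => X (c i) ω) ⁻¹' Set.pi Set.univ s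
      = ⋂ n ∈ Finset.image c Finset.univ, X n ⁻¹' sets n := by
    ext ω
    simp only [Set.mem_preimage, Set.mem_pi, Set.mem_univ, forall_true_left,
      Set.mem_iInter, Finset.mem_image, Finset.mem_univ, true_and]
    constructor
    · rintro h n ⟨i, rfl⟩
      rw [hsets_c i]
      exact h i
    · intro h i
      have := h (c i) ⟨i, rfl⟩
      rwa [hsets_c i] at this
  rw [hpre, hXindep.measure_inter_preimage_eq_mul _ (fun n _ => hsets_meas n),
    Finset.prod_image (fun i _ j _ h => hc h)]
  refine Finset.prod_congr rfl fun i _ => ?_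
  rw [hsets_c i, ← hXlaw (c i), Measure.map_apply (hXmeas (c i)) (hs i)]

/-- **Induction lemma**: suppose that with probability `γ > 0` the walk started at `0` stays
in `K_{-δ} = K - δv` up to time `k` and satisfies `S_k ∈ K_ε = K + εv`. Then for every
`ℓ ≥ 1` and every starting point `x ∈ K_δ = K + δv`,
`P^x[τ_K > ℓk, S_{ℓk} − x ∈ K_{ℓε}] ≥ γ^ℓ`. -/
theorem pushing_induction_lemma
    {d : ℕ} (hd : 1 ≤ d)
    (K : Set (EuclideanSpace ℝ (Fin d)))
    (hKclosed : IsClosed K) (hKconvex : Convex ℝ K)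
    (hKcone : ∀ c : ℝ, 0 ≤ c → ∀ x ∈ K, c • x ∈ K)
    (hKint : (interior K).Nonempty)
    (v : EuclideanSpace ℝ (Fin d)) (hv : v ∈ interior K)
    (μ : Measure (EuclideanSpace ℝ (Fin d))) [IsProbabilityMeasure μ]
    (Ω : Type) [MeasurableSpace Ω] (P : Measure Ω) [IsProbabilityMeasure P]
    (X : ℕ → Ω → EuclideanSpace ℝ (Fin d))
    (hXmeas : ∀ n, Measurable (X n))
    (hXindep : iIndepFun X P)
    (hXlaw : ∀ n, Measure.map (X n) P = μ)
    (k : ℕ) (hk : 1 ≤ k) (δ : ℝ) (hδ : 0 ≤ δ) (ε : ℝ) (hε : 0 < ε)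
    (γ : ℝ≥0∞)
    (hγ : P {ω | (∀ j : ℕ, 1 ≤ j → j ≤ k →
          (∑ i ∈ Finset.range j, X i ω) ∈ (· + (-δ) • v) '' K) ∧
        (∑ i ∈ Finset.range k, X i ω) ∈ (· + ε • v) '' K} = γ)
    (hγpos : 0 < γ)
    (ℓ : ℕ) (hℓ : 1 ≤ ℓ) (x : EuclideanSpace ℝ (Fin d)) (hx : x ∈ (· + δ • v) '' K) :
    γ ^ ℓ ≤ P {ω | (∀ j : ℕ, 1 ≤ j → j ≤ ℓ * k →
          x + ∑ i ∈ Finset.range j, X i ω ∈ K) ∧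
        (∑ i ∈ Finset.range (ℓ * k), X i ω) ∈ (· + ((ℓ : ℝ) * ε) • v) '' K} := by
  classical
  have hvK : v ∈ K := interior_subset hv
  have hcv : ∀ c : ℝ, 0 ≤ c → c • v ∈ K := fun c hc => hKcone c hc v hvK
  have hKadd : ∀ a ∈ K, ∀ b ∈ K, a + b ∈ K := by
    intro a ha b hb
    have hmid : (1/2 : ℝ) • a + (1/2 : ℝ) • b ∈ K :=
      hKconvex ha hb (by norm_num) (by norm_num) (by norm_num)
    have := hKcone 2 (by norm_num) _ hmid
    have heq : (2 : ℝ) • ((1/2 : ℝ) • a + (1/2 : ℝ) • b) = a + b := by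
      rw [smul_add, smul_smul, smul_smul]; norm_num
    rwa [heq] at this
  set D : Set (EuclideanSpace ℝ (Fin d)) := (· + (-δ) • v) '' K with hD
  set Dε : Set (EuclideanSpace ℝ (Fin d)) := (· + ε • v) '' K with hDε
  have hDmeas : MeasurableSet D := by
    rw [hD, Set.image_add_right]
    exact (measurable_add_const _) hKclosed.measurableSet
  have hDεmeas : MeasurableSet Dε := by
    rw [hDε, Set.image_add_right]
    exact (measurable_add_const _) hKclosed.measurableSet
  -- block sets
  set bs : ℕ → Set (ℕ → EuclideanSpace ℝ (Fin d)) := fun m =>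
    {f | (∀ j : ℕ, 1 ≤ j → j ≤ k → (∑ i ∈ Finset.range j, f (m*k+i)) ∈ D) ∧
      (∑ i ∈ Finset.range k, f (m*k+i)) ∈ Dε} with hbs
  have hbs_congr : ∀ m (f g : ℕ → EuclideanSpace ℝ (Fin d)), (∀ i < k, f (m*k+i) = g (m*k+i)) →
      (f ∈ bs m ↔ g ∈ bs m) := by
    intro m f g hfg
    have hsum : ∀ j ≤ k, ∑ i ∈ Finset.range j, f (m*k+i) = ∑ i ∈ Finset.range j, g (m*k+i) := by
      intro j hj
      exact Finset.sum_congr rfl fun i hi =>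
        hfg i (lt_of_lt_of_le (Finset.mem_range.mp hi) hj)
    constructor <;> rintro ⟨h1, h2⟩ <;>
      refine ⟨fun j hj1 hj2 => ?_, ?_⟩
    · rw [← hsum j hj2]; exact h1 j hj1 hj2
    · rw [← hsum k le_rfl]; exact h2
    · rw [hsum j hj2]; exact h1 j hj1 hj2
    · rw [hsum k le_rfl]; exact h2
  have hsum_meas : ∀ (c j : ℕ), Measurable (fun f : ℕ → EuclideanSpace ℝ (Fin d) => ∑ i ∈ Finset.range j, f (c+i)) :=
    fun c j => Finset.measurable_sum _ fun i _ => measurable_pi_apply _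
  have hbs_meas : ∀ m, MeasurableSet (bs m) := by
    intro m
    have : bs m = (⋂ j ∈ Finset.Icc 1 k,
        (fun f : ℕ → EuclideanSpace ℝ (Fin d) => ∑ i ∈ Finset.range j, f (m*k+i)) ⁻¹' D) ∩
        ((fun f : ℕ → EuclideanSpace ℝ (Fin d) => ∑ i ∈ Finset.range k, f (m*k+i)) ⁻¹' Dε) := by
      ext f
      simp only [hbs, Set.mem_setOf_eq, Set.mem_inter_iff, Set.mem_iInter, Set.mem_preimage,
        Finset.mem_Icc]
      constructor
      · rintro ⟨h1, h2⟩
        exact ⟨fun j hj => h1 j hj.1 hj.2, h2⟩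
      · rintro ⟨h1, h2⟩
        exact ⟨fun j hj1 hj2 => h1 j ⟨hj1, hj2⟩, h2⟩
    rw [this]
    exact (MeasurableSet.biInter (Finset.Icc 1 k).countable_toSet
      fun j _ => (hsum_meas _ _) hDmeas).inter ((hsum_meas _ _) hDεmeas)
  -- the block events
  set A : ℕ → Set Ω := fun m => {ω | (fun n => X n ω) ∈ bs m} with hA
  -- extension map for Fin k tuples
  set ext0 : (Fin k → EuclideanSpace ℝ (Fin d)) → (ℕ → EuclideanSpace ℝ (Fin d)) := fun f n => if h : n < k then f ⟨n, h⟩ else 0 with hext0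
  have hext0_meas : Measurable ext0 := by
    refine measurable_pi_lambda _ fun n => ?_
    simp only [hext0]
    split
    · exact measurable_pi_apply _
    · exact measurable_const
  set E0 : Set (Fin k → EuclideanSpace ℝ (Fin d)) := ext0 ⁻¹' bs 0 with hE0
  have hE0_meas : MeasurableSet E0 := hext0_meas (hbs_meas 0)
  have hQmeas : ∀ m, Measurable (fun ω (i : Fin k) => X (m*k + i) ω) :=
    fun m => measurable_pi_lambda _ fun i => hXmeas _
  have hAQ : ∀ m, A m = (fun ω (i : Fin k) => X (m*k + i) ω) ⁻¹' E0 := by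
    intro m
    ext ω
    simp only [hA, hE0, Set.mem_setOf_eq, Set.mem_preimage]
    rw [hbs_congr 0 (ext0 fun i : Fin k => X (m*k + i) ω) (fun n => X (m*k + n) ω) ?_]
    · constructor <;> rintro ⟨h1, h2⟩ <;> refine ⟨fun j hj1 hj2 => ?_, ?_⟩ <;>
        simp only [Nat.zero_mul, Nat.zero_add] at *
      · exact h1 j hj1 hj2
      · exact h2
      · exact h1 j hj1 hj2
      · exact h2
    · intro i hi
      simp only [hext0, Nat.zero_mul, Nat.zero_add, dif_pos hi]
  have hinj : ∀ m, Function.Injective (fun i : Fin k => m*k + (i : ℕ)) := by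
    intro m i j h
    exact Fin.ext (Nat.add_left_cancel h)
  have hlaw : ∀ m, P.map (fun ω (i : Fin k) => X (m*k + i) ω) = Measure.pi (fun _ => μ) :=
    fun m => aux_map_tuple_pi P μ X hXmeas hXindep hXlaw _ (hinj m)
  have hPA : ∀ m, P (A m) = γ := by
    intro m
    have h1 : P (A m) = Measure.pi (fun _ : Fin k => μ) E0 := by
      rw [hAQ m, ← Measure.map_apply (hQmeas m) hE0_meas, hlaw m]
    have h2 : P (A 0) = Measure.pi (fun _ : Fin k => μ) E0 := by
      rw [hAQ 0, ← Measure.map_apply (hQmeas 0) hE0_meas, hlaw 0]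
    have hA0 : A 0 = {ω | (∀ j : ℕ, 1 ≤ j → j ≤ k →
          (∑ i ∈ Finset.range j, X i ω) ∈ D) ∧
        (∑ i ∈ Finset.range k, X i ω) ∈ Dε} := by
      ext ω
      simp only [hA, hbs, Set.mem_setOf_eq, Nat.zero_mul, Nat.zero_add]
    rw [h1, ← h2, hA0, hγ]
  -- Step 2 : the measure of the intersection
  have claim2 : ∀ L : ℕ, P (⋂ m ∈ Finset.range L, A m) = γ ^ L := by
    intro L
    induction L with
    | zero => simp
    | succ n ih =>
      rw [Finset.range_add_one, Finset.set_biInter_insert]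
      -- independence set-up
      set S : Finset ℕ := Finset.range (n*k) with hS
      set T : Finset ℕ := Finset.Ico (n*k) (n*k+k) with hT
      have hST : Disjoint S T := by
        rw [Finset.disjoint_left]
        intro a haS haT
        rw [hS, Finset.mem_range] at haS
        rw [hT, Finset.mem_Ico] at haT
        exact absurd haT.1 (not_le.mpr haS)
      set U : Ω → (↥S → EuclideanSpace ℝ (Fin d)) := fun ω i => X i.1 ω with hU
      set V : Ω → (↥T → EuclideanSpace ℝ (Fin d)) := fun ω i => X i.1 ω with hV
      have hindep := hXindep.indepFun_finset S T hST hXmeas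
      -- extension maps
      set eS : (↥S → EuclideanSpace ℝ (Fin d)) → (ℕ → EuclideanSpace ℝ (Fin d)) :=
        fun h i => if hh : i ∈ S then h ⟨i, hh⟩ else 0 with heS
      set eT : (↥T → EuclideanSpace ℝ (Fin d)) → (ℕ → EuclideanSpace ℝ (Fin d)) :=
        fun h i => if hh : i ∈ T then h ⟨i, hh⟩ else 0 with heT
      have heS_meas : Measurable eS := by
        refine measurable_pi_lambda _ fun i => ?_
        simp only [heS]
        split
        · exact measurable_pi_apply _
        · exact measurable_const
      have heT_meas : Measurable eT := by
        refine measurable_pi_lambda _ fun i => ?_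
        simp only [heT]
        split
        · exact measurable_pi_apply _
        · exact measurable_const
      set sB : Set (↥S → EuclideanSpace ℝ (Fin d)) := ⋂ m ∈ Finset.range n, eS ⁻¹' bs m with hsB
      set tA : Set (↥T → EuclideanSpace ℝ (Fin d)) := eT ⁻¹' bs n with htA
      have hsB_meas : MeasurableSet sB :=
        MeasurableSet.biInter (Finset.range n).countable_toSet
          fun m _ => heS_meas (hbs_meas m)
      have htA_meas : MeasurableSet tA := heT_meas (hbs_meas n)
      have hBval : U ⁻¹' sB = ⋂ m ∈ Finset.range n, A m := by
        ext ω
        simp only [hsB, Set.mem_preimage, Set.mem_iInter, hA, Set.mem_setOf_eq]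
        refine forall_congr' fun m => forall_congr' fun hm => ?_
        rw [Finset.mem_range] at hm
        refine hbs_congr m _ _ fun i hi => ?_
        have hmem : m*k + i ∈ S := by
          rw [hS, Finset.mem_range]
          calc m*k + i < m*k + k := by omega
          _ = (m+1)*k := by ring
          _ ≤ n*k := Nat.mul_le_mul_right k hm
        simp only [heS, hU, dif_pos hmem]
      have hAval : V ⁻¹' tA = A n := by
        ext ω
        simp only [htA, Set.mem_preimage, hA, Set.mem_setOf_eq]
        refine hbs_congr n _ _ fun i hi => ?_
        have hmem : n*k + i ∈ T := by
          rw [hT, Finset.mem_Ico]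
          omega
        simp only [heT, hV, dif_pos hmem]
      have := hindep.measure_inter_preimage_eq_mul sB tA hsB_meas htA_meas
      rw [hBval, hAval] at this
      rw [Set.inter_comm, this, ih, hPA n, pow_succ]
  -- Step 3 : deterministic inclusion
  obtain ⟨y, hyK, hyx⟩ := hx
  simp only [] at hyx
  have hsubset : (⋂ m ∈ Finset.range ℓ, A m) ⊆
      {ω | (∀ j : ℕ, 1 ≤ j → j ≤ ℓ * k →
          x + ∑ i ∈ Finset.range j, X i ω ∈ K) ∧
        (∑ i ∈ Finset.range (ℓ * k), X i ω) ∈ (· + ((ℓ : ℝ) * ε) • v) '' K} := by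
    intro ω hω
    rw [Set.mem_iInter₂] at hω
    have main : ∀ m, m ≤ ℓ →
        (∀ j : ℕ, 1 ≤ j → j ≤ m * k → x + ∑ i ∈ Finset.range j, X i ω ∈ K) ∧
        ∃ z ∈ K, ∑ i ∈ Finset.range (m*k), X i ω = z + ((m : ℝ) * ε) • v := by
      intro m
      induction m with
      | zero =>
        intro _
        refine ⟨fun j hj1 hj2 => absurd (le_trans hj1 hj2) (by simp), ⟨0, ?_, by simp⟩⟩
        have := hKcone 0 le_rfl v hvK
        rwa [zero_smul] at this
      | succ m ih =>
        intro hm1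
        obtain ⟨ha, z, hzK, hz⟩ := ih (le_of_lt hm1)
        have hωm := hω m (Finset.mem_range.mpr hm1)
        simp only [hA, hbs, Set.mem_setOf_eq] at hωm
        obtain ⟨hblock, hlast⟩ := hωm
        obtain ⟨w, hwK, hw⟩ := hlast
        simp only [] at hw
        constructor
        · intro j hj1 hj2
          by_cases hcase : j ≤ m*k
          · exact ha j hj1 hcase
          · push_neg at hcase
            have hjeq : j = m*k + (j - m*k) := by omega
            have hj'1 : 1 ≤ j - m*k := by omega
            have hj'2 : j - m*k ≤ k := by
              have h2 : j ≤ (m+1)*k := hj2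
              have h3 : (m+1)*k = m*k + k := by ring
              omega
            obtain ⟨b, hbK, hb⟩ := hblock (j - m*k) hj'1 hj'2
            simp only [] at hb
            have hsplit : ∑ i ∈ Finset.range j, X i ω =
                (∑ i ∈ Finset.range (m*k), X i ω) +
                  ∑ i ∈ Finset.range (j - m*k), X (m*k + i) ω := by
              conv_lhs => rw [hjeq]
              rw [Finset.sum_range_add]
            have hxeq : x + ∑ i ∈ Finset.range j, X i ω
                = y + z + ((m : ℝ) * ε) • v + b := by
              rw [hsplit, ← hyx, hz, ← hb, neg_smul]
              abel
            rw [hxeq]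
            exact hKadd _ (hKadd _ (hKadd _ hyK _ hzK) _
              (hcv _ (mul_nonneg (Nat.cast_nonneg m) hε.le))) _ hbK
        · refine ⟨z + w, hKadd _ hzK _ hwK, ?_⟩
          have hmk : (m+1)*k = m*k + k := by ring
          rw [hmk, Finset.sum_range_add, hz, ← hw]
          have hsm : (((m+1 : ℕ) : ℝ) * ε) • v = ((m : ℝ) * ε) • v + ε • v := by
            push_cast
            rw [← add_smul]
            ring_nf
          rw [hsm]
          abel
        
    obtain ⟨h1, z, hzK, hz⟩ := main ℓ le_rfl
    exact ⟨h1, ⟨z, hzK, hz.symm⟩⟩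
  calc γ ^ ℓ = P (⋂ m ∈ Finset.range ℓ, A m) := (claim2 ℓ).symm
  _ ≤ _ := measure_mono hsubset
end
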